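/- arXiv:math/0412349 — 3 statements merged into one kernel-verified Lean document; each statement's English description precedes it below -/
import Mathlib

section
/- A random probability measure P=(P_A)_{A∈ℬ} is neutral to the right if and only if for every B₁,B₂∈𝒜(u) with B₁⊆B₂, the random variable V_{B₁B₂} is independent of the σ-field ℱ_{B₁}:=σ(P_A : A∈𝒜, A⊆B₁). -/
open MeasureTheory ProbabilityTheory Set
open scoped ENNReal Classical BigOperators

/-- The collection of finite unions of members of `S`. -/
def finUnions {𝒳 : Type*} (S : Set (Set 𝒳)) : Set (Set 𝒳) :=
  {B | ∃ T : Finset (Set 𝒳), ↑T ⊆ S ∧ B = ⋃₀ ↑T}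

/-- An indexing collection on a topological space `𝒳`: a family of closed sets generating the
Borel σ-field, containing `∅` and `univ`, closed under arbitrary intersections, any two nonempty
members intersecting, and admitting a sequence of finite sub-semilattices approximating every
member from outside. -/
structure IndexingCollection (𝒳 : Type*) [TopologicalSpace 𝒳] [MeasurableSpace 𝒳] : Type _ where
  sets : Set (Set 𝒳)
  isClosed' : ∀ A ∈ sets, IsClosed A
  generates : MeasurableSpace.generateFrom sets = ‹MeasurableSpace 𝒳›
  empty_mem : ∅ ∈ sets
  univ_mem : Set.univ ∈ sets
  sInter_mem : ∀ S ⊆ sets, S.Nonempty → ⋂₀ S ∈ sets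
  inter_nonempty : ∀ A ∈ sets, ∀ B ∈ sets, A.Nonempty → B.Nonempty → (A ∩ B).Nonempty
  approx : ∃ An : ℕ → Set (Set 𝒳),
    (∀ n, An n ⊆ sets ∧ (An n).Finite ∧ ∀ A ∈ An n, ∀ B ∈ An n, A ∩ B ∈ An n) ∧
    ∀ A ∈ sets, ∃ Bn : ℕ → Set 𝒳,
      (∀ n, Bn n ∈ finUnions (An n)) ∧ A = ⋂ n, Bn n ∧ ∀ n, A ⊆ interior (Bn n)

variable {𝒳 Ω : Type*} [TopologicalSpace 𝒳] [MeasurableSpace 𝒳] [BorelSpace 𝒳]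
  [MeasurableSpace Ω]

/-- `P = (P_A)_{A ∈ ℬ}` is a random probability measure: the `P_A` are `[0,1]`-valued random
variables, finitely additive in distribution, with `P_𝒳 = 1` a.s. and countably additive in
distribution. -/
structure IsRPM (Pr : Measure Ω) (P : Set 𝒳 → Ω → ℝ) : Prop where
  meas : ∀ A : Set 𝒳, MeasurableSet A → Measurable (P A)
  mem_Icc : ∀ A : Set 𝒳, MeasurableSet A → ∀ ω, P A ω ∈ Set.Icc (0:ℝ) 1
  finAdd : ∀ (k m : ℕ) (A : ℕ → Set 𝒳), (∀ j, MeasurableSet (A j)) →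
    (∀ i j, i < k → j < k → i ≠ j → Disjoint (A i) (A j)) →
    ∀ c : Fin (m+1) → ℕ, Monotone c → c 0 = 0 → c (Fin.last m) = k →
      Measure.map (fun ω (l : Fin m) =>
          P (⋃ j ∈ Finset.Ico (c l.castSucc) (c l.succ), A j) ω) Pr
        = Measure.map (fun ω (l : Fin m) =>
            ∑ j ∈ Finset.Ico (c l.castSucc) (c l.succ), P (A j) ω) Pr
  univ_one : ∀ᵐ ω ∂Pr, P Set.univ ω = 1
  ctsAdd : ∀ A : ℕ → Set 𝒳, (∀ n, MeasurableSet (A n)) → Antitone A → (⋂ n, A n) = ∅ →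
    ∀ᵐ ω ∂Pr, Filter.Tendsto (fun n => P (A n) ω) Filter.atTop (nhds 0)

/-- The σ-field `ℱ_{B}` generated by `P_A`, `A ∈ 𝒜`, `A ⊆ B`. -/
def sigmaF (I : IndexingCollection 𝒳) (P : Set 𝒳 → Ω → ℝ) (B : Set 𝒳) : MeasurableSpace Ω :=
  ⨆ (A : Set 𝒳) (_ : A ∈ I.sets ∧ A ⊆ B), MeasurableSpace.comap (P A) inferInstance

/-- The σ-field generated by the whole process `P`. -/
def sigmaP (P : Set 𝒳 → Ω → ℝ) : MeasurableSpace Ω :=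
  ⨆ (A : Set 𝒳) (_ : MeasurableSet A), MeasurableSpace.comap (P A) inferInstance

/-- `Q` is a transition system: each `Q_{B₁B₂}` (for `B₁ ⊆ B₂` in `𝒜(u)`) is a transition
probability on `[0,1]` and the Chapman–Kolmogorov equations hold. -/
def IsTransitionSystem (I : IndexingCollection 𝒳)
    (Q : Set 𝒳 → Set 𝒳 → Kernel ℝ ℝ) : Prop :=
  (∀ B₁ B₂, B₁ ∈ finUnions I.sets → B₂ ∈ finUnions I.sets → B₁ ⊆ B₂ →
      ∀ z ∈ Set.Icc (0:ℝ) 1, Q B₁ B₂ z (Set.Icc (0:ℝ) 1) = 1) ∧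
  ∀ B₁ B₂ B₃, B₁ ∈ finUnions I.sets → B₂ ∈ finUnions I.sets → B₃ ∈ finUnions I.sets →
    B₁ ⊆ B₂ → B₂ ⊆ B₃ → ∀ z₁ ∈ Set.Icc (0:ℝ) 1, ∀ Γ : Set ℝ, MeasurableSet Γ →
      Q B₁ B₃ z₁ Γ = ∫⁻ z₂ in Set.Icc (0:ℝ) 1, Q B₂ B₃ z₂ Γ ∂(Q B₁ B₂ z₁)

/-- `P` is `𝒬`-Markov: for all `B₁ ⊆ B₂` in `𝒜(u)`,
`Pr[P_{B₂} ∈ Γ₂ | ℱ_{B₁}] = Q_{B₁B₂}(P_{B₁}; Γ₂)` a.s. -/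
def IsQMarkov (I : IndexingCollection 𝒳) (Pr : Measure Ω) (P : Set 𝒳 → Ω → ℝ)
    (Q : Set 𝒳 → Set 𝒳 → Kernel ℝ ℝ) : Prop :=
  ∀ B₁ B₂, B₁ ∈ finUnions I.sets → B₂ ∈ finUnions I.sets → B₁ ⊆ B₂ →
    ∀ Γ : Set ℝ, MeasurableSet Γ →
      Pr[Set.indicator {ω | P B₂ ω ∈ Γ} (fun _ => (1:ℝ)) | sigmaF I P B₁]
        =ᵐ[Pr] fun ω => (Q B₁ B₂ (P B₁ ω) Γ).toReal

/-- `X₁, …, X_n` is a sample from `P`: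
`Pr[X₁ ∈ A₁, …, X_n ∈ A_n | P] = ∏ᵢ P_{Aᵢ}` a.s. -/
def IsSample (Pr : Measure Ω) (P : Set 𝒳 → Ω → ℝ) {n : ℕ} (X : Fin n → Ω → 𝒳) : Prop :=
  (∀ i, Measurable (X i)) ∧
  ∀ A : Fin n → Set 𝒳, (∀ i, MeasurableSet (A i)) →
    Pr[Set.indicator {ω | ∀ i, X i ω ∈ A i} (fun _ => (1:ℝ)) | sigmaP P]
      =ᵐ[Pr] fun ω => ∏ i, P (A i) ω

/-- `V_{B₁B₂} = (P_{B₂} - P_{B₁})/(1 - P_{B₁})` on `{P_{B₁} < 1}`, and `1` elsewhere. -/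
noncomputable def Vr (P : Set 𝒳 → Ω → ℝ) (B₁ B₂ : Set 𝒳) (ω : Ω) : ℝ :=
  if P B₁ ω < 1 then (P B₂ ω - P B₁ ω) / (1 - P B₁ ω) else 1

/-- `P` is neutral to the right: for every chain `B₀ ⊆ … ⊆ B_k` in `𝒜(u)` the random variables
`P_{B₀}, V_{B₀B₁}, …, V_{B_{k-1}B_k}` are independent. -/
def IsNTR (I : IndexingCollection 𝒳) (Pr : Measure Ω) (P : Set 𝒳 → Ω → ℝ) : Prop :=
  ∀ (k : ℕ) (B : Fin (k+1) → Set 𝒳), (∀ i, B i ∈ finUnions I.sets) →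
    (∀ i j, i ≤ j → B i ⊆ B j) →
    iIndepFun
      (fun i : Fin (k+1) => Fin.cases (motive := fun _ => Ω → ℝ) (P (B 0))
        (fun i' : Fin k => Vr P (B i'.castSucc) (B i'.succ)) i) Pr

/-- A family `(F_{B₁B₂})` of laws on `[0,1]` is a neutral to the right system. -/
def IsNTRSystem (I : IndexingCollection 𝒳) (F : Set 𝒳 → Set 𝒳 → Measure ℝ) : Prop :=
  ∀ B₁ B₂ B₃, B₁ ∈ finUnions I.sets → B₂ ∈ finUnions I.sets → B₃ ∈ finUnions I.sets →
    B₁ ⊆ B₂ → B₂ ⊆ B₃ → ∀ Γ : Set ℝ, MeasurableSet Γ →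
      F B₁ B₃ Γ = ∫⁻ y in Set.Icc (0:ℝ) 1, ∫⁻ z in Set.Icc (0:ℝ) 1,
        Γ.indicator (fun _ => (1:ℝ≥0∞)) (y + z - y * z) ∂(F B₂ B₃) ∂(F B₁ B₂)

/-! ### Auxiliary machinery for Statement 6 -/

set_option linter.unusedSectionVars false

section Stmt6Aux

variable {𝒳 Ω : Type*} [TopologicalSpace 𝒳] [MeasurableSpace 𝒳] [BorelSpace 𝒳]
  [MeasurableSpace Ω] {I : IndexingCollection 𝒳} {Pr : Measure Ω} {P : Set 𝒳 → Ω → ℝ}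

lemma IndexingCollection.measurableSet_of_mem (I : IndexingCollection 𝒳) {A : Set 𝒳}
    (hA : A ∈ I.sets) : MeasurableSet A :=
  (I.isClosed' A hA).measurableSet

lemma finUnions_measurableSet {B : Set 𝒳} (hB : B ∈ finUnions I.sets) : MeasurableSet B := by
  obtain ⟨T, hT, rfl⟩ := hB
  exact Set.Finite.measurableSet_sUnion (T.finite_toSet)
    (fun t ht => I.measurableSet_of_mem (hT ht))

lemma mem_finUnions_of_mem {A : Set 𝒳} (hA : A ∈ I.sets) : A ∈ finUnions I.sets :=
  ⟨{A}, by simpa using hA, by simp⟩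

/-- the scalar function underlying `Vr` -/
noncomputable def vrf (x y : ℝ) : ℝ := if x < 1 then (y - x) / (1 - x) else 1

lemma Vr_eq_vrf (P : Set 𝒳 → Ω → ℝ) (B₁ B₂ : Set 𝒳) (ω : Ω) :
    Vr P B₁ B₂ ω = vrf (P B₁ ω) (P B₂ ω) := rfl

lemma measurable_vrf : Measurable (fun p : ℝ × ℝ => vrf p.1 p.2) := by
  unfold vrf
  exact Measurable.ite (measurableSet_lt measurable_fst measurable_const)
    ((measurable_snd.sub measurable_fst).div (measurable_const.sub measurable_fst))
    measurable_const

lemma measurable_Vr (h1 : Measurable (P B₁)) (h2 : Measurable (P B₂)) :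
    Measurable (Vr P B₁ B₂) :=
  measurable_vrf.comp (h1.prodMk h2)

/-- Key consequence of distributional finite additivity together with `P univ = 1` a.s.:
the process is a.s. additive over three-set partitions of the whole space. -/
lemma IsRPM.sum3 (hP : IsRPM Pr P) {A B C : Set 𝒳} (hA : MeasurableSet A) (hB : MeasurableSet B)
    (hC : MeasurableSet C) (hAB : Disjoint A B) (hAC : Disjoint A C) (hBC : Disjoint B C)
    (hcov : A ∪ B ∪ C = Set.univ) :
    ∀ᵐ ω ∂Pr, P A ω + P B ω + P C ω = 1 := by
  classical
  set f : ℕ → Set 𝒳 := fun j => if j = 0 then A else if j = 1 then B else if j = 2 then C else ∅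
    with hf
  have hmeas : ∀ j, MeasurableSet (f j) := by
    intro j; simp only [hf]; split_ifs
    · exact hA
    · exact hB
    · exact hC
    · exact MeasurableSet.empty
  have hdisj : ∀ i j, i < 3 → j < 3 → i ≠ j → Disjoint (f i) (f j) := by
    intro i j hi hj hij
    interval_cases i <;> interval_cases j <;>
      simp_all [hf, Disjoint.symm, disjoint_comm (a := B)] <;> tauto
  have hcmono : Monotone (![0, 3] : Fin 2 → ℕ) := by
    intro a b hab
    fin_cases a <;> fin_cases b <;> simp_all
  have hmap := hP.finAdd 3 1 f hmeas hdisj ![0, 3] hcmono (by simp) (by simp [Fin.last])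
  have hIco : (Finset.Ico (0:ℕ) 3) = {0, 1, 2} := by decide
  have hsetU : (⋃ j ∈ Finset.Ico ((![0,3] : Fin 2 → ℕ) (Fin.castSucc 0))
      ((![0,3] : Fin 2 → ℕ) (Fin.succ 0)), f j) = Set.univ := by
    have h0 : (![0,3] : Fin 2 → ℕ) (Fin.castSucc 0) = 0 := rfl
    have h1 : (![0,3] : Fin 2 → ℕ) (Fin.succ 0) = 3 := rfl
    rw [h0, h1, hIco]
    simp only [Finset.mem_insert, Finset.mem_singleton, Set.biUnion_insert,
      Set.biUnion_singleton, hf]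
    simp [← hcov, Set.union_assoc]
  have hsum : ∀ ω, (∑ j ∈ Finset.Ico ((![0,3] : Fin 2 → ℕ) (Fin.castSucc 0))
      ((![0,3] : Fin 2 → ℕ) (Fin.succ 0)), P (f j) ω) = P A ω + P B ω + P C ω := by
    intro ω
    have h0 : (![0,3] : Fin 2 → ℕ) (Fin.castSucc 0) = 0 := rfl
    have h1 : (![0,3] : Fin 2 → ℕ) (Fin.succ 0) = 3 := rfl
    rw [h0, h1, hIco]
    simp [hf, add_assoc]
  set F : Ω → (Fin 1 → ℝ) := fun ω _ => P Set.univ ω with hFdef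
  set G : Ω → (Fin 1 → ℝ) := fun ω _ => P A ω + P B ω + P C ω with hGdef
  have hFeq : (fun ω (l : Fin 1) =>
      P (⋃ j ∈ Finset.Ico ((![0,3] : Fin 2 → ℕ) l.castSucc)
        ((![0,3] : Fin 2 → ℕ) l.succ), f j) ω) = F := by
    funext ω l
    have : l = 0 := Subsingleton.elim _ _
    subst this
    rw [hFdef]; simp only [hsetU]
  have hGeq : (fun ω (l : Fin 1) =>
      ∑ j ∈ Finset.Ico ((![0,3] : Fin 2 → ℕ) l.castSucc) ((![0,3] : Fin 2 → ℕ) l.succ),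
        P (f j) ω) = G := by
    funext ω l
    have : l = 0 := Subsingleton.elim _ _
    subst this
    rw [hGdef]; simp only [hsum]
  rw [hFeq, hGeq] at hmap
  have hFmeas : Measurable F := measurable_pi_lambda _ (fun _ => hP.meas _ MeasurableSet.univ)
  have hGmeas : Measurable G := measurable_pi_lambda _
    (fun _ => ((hP.meas A hA).add (hP.meas B hB)).add (hP.meas C hC))
  set s : Set (Fin 1 → ℝ) := (fun x : Fin 1 → ℝ => x 0) ⁻¹' ({1}ᶜ) with hs
  have hsmeas : MeasurableSet s := (measurable_pi_apply 0) (measurableSet_singleton 1).compl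
  have hF0 : Pr (F ⁻¹' s) = 0 := by
    have : F ⁻¹' s = {ω | ¬ P Set.univ ω = 1} := by
      ext ω; simp [hs, hFdef]
    rw [this]
    exact hP.univ_one
  have hG0 : Pr (G ⁻¹' s) = 0 := by
    rw [← Measure.map_apply hGmeas hsmeas, ← hmap, Measure.map_apply hFmeas hsmeas]
    exact hF0
  have : G ⁻¹' s = {ω | ¬ (P A ω + P B ω + P C ω = 1)} := by
    ext ω; simp [hs, hGdef]
  rw [this] at hG0
  exact hG0

lemma IsRPM.empty_zero (hP : IsRPM Pr P) : ∀ᵐ ω ∂Pr, P (∅ : Set 𝒳) ω = 0 := by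
  have h := hP.sum3 MeasurableSet.univ MeasurableSet.empty MeasurableSet.empty
    (disjoint_bot_right) (disjoint_bot_right) (disjoint_bot_right) (by simp)
  filter_upwards [h, hP.univ_one] with ω h1 h2
  linarith

lemma IsRPM.compl_add (hP : IsRPM Pr P) {A : Set 𝒳} (hA : MeasurableSet A) :
    ∀ᵐ ω ∂Pr, P A ω + P Aᶜ ω = 1 := by
  have h := hP.sum3 hA hA.compl MeasurableSet.empty disjoint_compl_right
    disjoint_bot_right disjoint_bot_right (by simp)
  filter_upwards [h, hP.empty_zero] with ω h1 h2
  linarith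

lemma IsRPM.add_diff (hP : IsRPM Pr P) {A B : Set 𝒳} (hA : MeasurableSet A)
    (hB : MeasurableSet B) (hsub : A ⊆ B) :
    ∀ᵐ ω ∂Pr, P B ω = P A ω + P (B \ A) ω := by
  have hdAB : Disjoint A (B \ A) := disjoint_sdiff_self_right
  have hdAC : Disjoint A Bᶜ := disjoint_compl_right.mono_right (Set.compl_subset_compl.mpr hsub)
  have hdBC : Disjoint (B \ A) Bᶜ := disjoint_compl_right.mono_left Set.diff_subset
  have hcov : A ∪ (B \ A) ∪ Bᶜ = Set.univ := by
    rw [Set.union_diff_cancel hsub, Set.union_compl_self]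
  have h := hP.sum3 hA (hB.diff hA) hB.compl hdAB hdAC hdBC hcov
  filter_upwards [h, hP.compl_add hB] with ω h1 h2
  linarith

lemma IsRPM.mono' (hP : IsRPM Pr P) {A B : Set 𝒳} (hA : MeasurableSet A)
    (hB : MeasurableSet B) (hsub : A ⊆ B) :
    ∀ᵐ ω ∂Pr, P A ω ≤ P B ω := by
  filter_upwards [hP.add_diff hA hB hsub] with ω h1
  have := (hP.mem_Icc (B \ A) (hB.diff hA) ω).1
  linarith

lemma IsRPM.modular (hP : IsRPM Pr P) {A B : Set 𝒳} (hA : MeasurableSet A)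
    (hB : MeasurableSet B) :
    ∀ᵐ ω ∂Pr, P (A ∪ B) ω = P A ω + P B ω - P (A ∩ B) ω := by
  have h1 := hP.add_diff hA (hA.union hB) Set.subset_union_left
  have h2 := hP.add_diff (hA.inter hB) hB Set.inter_subset_right
  have e1 : (A ∪ B) \ A = B \ A := Set.union_diff_left
  have e2 : B \ (A ∩ B) = B \ A := Set.diff_inter_self_eq_diff
  rw [e1] at h1
  rw [e2] at h2
  filter_upwards [h1, h2] with ω h1 h2
  linarith

lemma IsRPM.vr_rec (hP : IsRPM Pr P) {B₁ B₂ : Set 𝒳} (h1 : MeasurableSet B₁)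
    (h2 : MeasurableSet B₂) (hsub : B₁ ⊆ B₂) :
    ∀ᵐ ω ∂Pr, P B₂ ω = P B₁ ω + Vr P B₁ B₂ ω * (1 - P B₁ ω) := by
  filter_upwards [hP.mono' h1 h2 hsub] with ω hmono
  rw [Vr]
  by_cases hlt : P B₁ ω < 1
  · rw [if_pos hlt]
    have hne : (1 : ℝ) - P B₁ ω ≠ 0 := by linarith
    field_simp
    ring
  · rw [if_neg hlt]
    have hle1 : P B₁ ω ≤ 1 := (hP.mem_Icc B₁ h1 ω).2
    have hle2 : P B₂ ω ≤ 1 := (hP.mem_Icc B₂ h2 ω).2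
    have : P B₁ ω = 1 := le_antisymm hle1 (not_lt.mp hlt)
    have : P B₂ ω = 1 := le_antisymm hle2 (by linarith)
    linarith

end Stmt6Aux

section Stmt6Aux2

set_option linter.unusedSectionVars false

variable {𝒳 Ω : Type*} [TopologicalSpace 𝒳] [MeasurableSpace 𝒳] [BorelSpace 𝒳]
  [MeasurableSpace Ω] {I : IndexingCollection 𝒳} {Pr : Measure Ω} {P : Set 𝒳 → Ω → ℝ}

lemma sUnion_finset_inter (S : Finset (Set 𝒳)) (C : Set 𝒳) :
    (⋃₀ ↑S) ∩ C = ⋃₀ ↑(S.image (· ∩ C)) := by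
  classical
  ext x
  simp only [Set.mem_inter_iff, Set.mem_sUnion, Finset.coe_image, Set.mem_image,
    Finset.mem_coe]
  constructor
  · rintro ⟨⟨t, ht, hxt⟩, hxC⟩
    exact ⟨t ∩ C, ⟨t, ht, rfl⟩, hxt, hxC⟩
  · rintro ⟨_, ⟨t, ht, rfl⟩, hxt, hxC⟩
    exact ⟨⟨t, ht, hxt⟩, hxC⟩

lemma measurableSet_sUnion_finset {T : Finset (Set 𝒳)} (hT : (↑T : Set (Set 𝒳)) ⊆ I.sets) :
    MeasurableSet (⋃₀ (↑T : Set (Set 𝒳))) :=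
  finUnions_measurableSet (I := I) ⟨T, hT, rfl⟩

/-- `f` is a.e. recoverable as a measurable function of the vector `v`. -/
def RecOf (Pr : Measure Ω) (v : Ω → ℕ → ℝ) (f : Ω → ℝ) : Prop :=
  ∃ G : (ℕ → ℝ) → ℝ, Measurable G ∧ f =ᵐ[Pr] fun ω => G (v ω)

lemma RecOf.congr {v : Ω → ℕ → ℝ} {f g : Ω → ℝ} (h : RecOf Pr v f) (hfg : f =ᵐ[Pr] g) :
    RecOf Pr v g := by
  obtain ⟨G, hG, hae⟩ := h
  exact ⟨G, hG, hfg.symm.trans hae⟩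

lemma RecOf.add {v : Ω → ℕ → ℝ} {f g : Ω → ℝ} (hf : RecOf Pr v f) (hg : RecOf Pr v g) :
    RecOf Pr v (fun ω => f ω + g ω) := by
  obtain ⟨G, hG, haeG⟩ := hf
  obtain ⟨H, hH, haeH⟩ := hg
  refine ⟨fun x => G x + H x, hG.add hH, ?_⟩
  filter_upwards [haeG, haeH] with ω h1 h2
  simp [h1, h2]

lemma RecOf.sub {v : Ω → ℕ → ℝ} {f g : Ω → ℝ} (hf : RecOf Pr v f) (hg : RecOf Pr v g) :
    RecOf Pr v (fun ω => f ω - g ω) := by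
  obtain ⟨G, hG, haeG⟩ := hf
  obtain ⟨H, hH, haeH⟩ := hg
  refine ⟨fun x => G x - H x, hG.sub hH, ?_⟩
  filter_upwards [haeG, haeH] with ω h1 h2
  simp [h1, h2]

lemma recOf_coord {v : Ω → ℕ → ℝ} (n : ℕ) : RecOf Pr v (fun ω => v ω n) :=
  ⟨fun x => x n, measurable_pi_apply n, Filter.EventuallyEq.rfl⟩

lemma RecOf.comp_R {v v' : Ω → ℕ → ℝ} {f : Ω → ℝ} {R : (ℕ → ℝ) → ℕ → ℝ}
    (hR : Measurable R) (hvv' : ∀ ω, v' ω = R (v ω)) (h : RecOf Pr v' f) : RecOf Pr v f := by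
  obtain ⟨G, hG, hae⟩ := h
  refine ⟨fun x => G (R x), hG.comp hR, ?_⟩
  refine hae.trans (Filter.Eventually.of_forall fun ω => ?_)
  show G (v' ω) = G (R (v ω))
  exact congrArg G (hvv' ω)

/-- **Key lemma**: for an intersection-closed finite family `𝒞 ⊆ 𝒜` of subsets of `B₁`, there
is an increasing chain `E` in `𝒜(u)` ending at `⋃₀ 𝒞` such that `P` of every union of a
subfamily of `𝒞` is a.e. a measurable function of `(P (E n))ₙ`. -/
lemma IsRPM.key (hP : IsRPM Pr P) (I : IndexingCollection 𝒳) {B₁ : Set 𝒳}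
    (𝒞 : Finset (Set 𝒳)) :
    (∀ C ∈ 𝒞, C ∈ I.sets ∧ C ⊆ B₁) → (∀ C₁ ∈ 𝒞, ∀ C₂ ∈ 𝒞, C₁ ∩ C₂ ∈ 𝒞) →
    ∃ (M : ℕ) (E : ℕ → Set 𝒳), Monotone E ∧ (∀ n, E n ∈ finUnions I.sets ∧ E n ⊆ B₁) ∧
      (∀ n, M ≤ n → E n = ⋃₀ ↑𝒞) ∧
      (∀ S ∈ 𝒞.powerset, RecOf Pr (fun ω n => P (E n) ω) (P (⋃₀ ↑S))) := by
  classical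
  induction 𝒞 using Finset.strongInduction with
  | _ 𝒞 ih =>
    intro h𝒞 hinter
    rcases Finset.eq_empty_or_nonempty 𝒞 with rfl | hne
    · refine ⟨0, fun _ => ∅, monotone_const,
        fun n => ⟨⟨∅, by simp, by simp⟩, Set.empty_subset _⟩, by simp, ?_⟩
      intro S hS
      rw [Finset.mem_powerset, Finset.subset_empty] at hS; subst hS
      exact ⟨fun _ => 0, measurable_const, by simpa [Filter.EventuallyEq] using hP.empty_zero⟩
    · obtain ⟨C₀, hC₀⟩ := hne
      obtain ⟨Cm, _, hmax⟩ := Set.Finite.exists_le_maximal (𝒞.finite_toSet) hC₀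
      have hCm : Cm ∈ 𝒞 := hmax.1
      set 𝒞' := 𝒞.erase Cm with h𝒞'def
      have hsub' : 𝒞' ⊂ 𝒞 := Finset.erase_ssubset hCm
      have hmem' : ∀ C ∈ 𝒞', C ∈ 𝒞 := fun C hC => Finset.mem_of_mem_erase hC
      have hne_of_inter : ∀ C ∈ 𝒞, C ∩ Cm = Cm → C = Cm := by
        intro C hC heq
        have h1 : Cm ⊆ C := Set.inter_eq_right.mp heq
        exact le_antisymm (hmax.2 (Finset.mem_coe.mpr hC) h1) h1
      have hinterCm : ∀ C ∈ 𝒞', C ∩ Cm ∈ 𝒞' := by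
        intro C hC
        refine Finset.mem_erase.mpr ⟨?_, hinter C (hmem' C hC) Cm hCm⟩
        intro heq
        have hCeq : C = Cm := hne_of_inter C (hmem' C hC) heq
        exact (Finset.mem_erase.mp hC).1 hCeq
      have hinter' : ∀ C₁ ∈ 𝒞', ∀ C₂ ∈ 𝒞', C₁ ∩ C₂ ∈ 𝒞' := by
        intro C₁ h₁ C₂ h₂
        refine Finset.mem_erase.mpr ⟨?_, hinter C₁ (hmem' _ h₁) C₂ (hmem' _ h₂)⟩
        intro heq
        have h1 : Cm ⊆ C₁ := heq ▸ Set.inter_subset_left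
        have hCeq : C₁ = Cm := le_antisymm (hmax.2 (Finset.mem_coe.mpr (hmem' _ h₁)) h1) h1
        exact (Finset.mem_erase.mp h₁).1 hCeq
      obtain ⟨M', E', hmono', hmem'', htail', hrec'⟩ :=
        ih 𝒞' hsub' (fun C hC => h𝒞 C (hmem' C hC)) hinter'
      have h𝒞meas : MeasurableSet (⋃₀ (↑𝒞 : Set (Set 𝒳))) :=
        measurableSet_sUnion_finset (fun C hC => (h𝒞 C hC).1)
      have hCmmeas : MeasurableSet Cm := I.measurableSet_of_mem (h𝒞 Cm hCm).1
      set U' : Set 𝒳 := ⋃₀ ↑𝒞' with hU'def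
      have hU'meas : MeasurableSet U' :=
        measurableSet_sUnion_finset (fun C hC => (h𝒞 C (hmem' C hC)).1)
      set E : ℕ → Set 𝒳 := fun n => if n ≤ M' then E' n else ⋃₀ ↑𝒞 with hEdef
      have hE'U : ∀ n, E' n ⊆ ⋃₀ ↑𝒞 := by
        intro n
        rcases le_total n M' with h | h
        · refine (hmono' h).trans ?_
          rw [htail' M' le_rfl]
          exact Set.sUnion_subset_sUnion (fun C hC => Finset.mem_coe.mpr
            (hmem' C (Finset.mem_coe.mp hC)))
        · rw [htail' n h]
          exact Set.sUnion_subset_sUnion (fun C hC => Finset.mem_coe.mpr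
            (hmem' C (Finset.mem_coe.mp hC)))
      have hmonoE : Monotone E := by
        intro a b hab
        by_cases ha : a ≤ M' <;> by_cases hb : b ≤ M'
        · show (if a ≤ M' then E' a else ⋃₀ ↑𝒞) ⊆ (if b ≤ M' then E' b else ⋃₀ ↑𝒞)
          rw [if_pos ha, if_pos hb]; exact hmono' hab
        · show (if a ≤ M' then E' a else ⋃₀ ↑𝒞) ⊆ (if b ≤ M' then E' b else ⋃₀ ↑𝒞)
          rw [if_pos ha, if_neg hb]; exact hE'U a
        · omega
        · show (if a ≤ M' then E' a else ⋃₀ ↑𝒞) ⊆ (if b ≤ M' then E' b else ⋃₀ ↑𝒞)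
          rw [if_neg ha, if_neg hb]
      have hmemE : ∀ n, E n ∈ finUnions I.sets ∧ E n ⊆ B₁ := by
        intro n
        by_cases hn : n ≤ M'
        · show (if n ≤ M' then E' n else ⋃₀ ↑𝒞) ∈ finUnions I.sets ∧
            (if n ≤ M' then E' n else ⋃₀ ↑𝒞) ⊆ B₁
          rw [if_pos hn]; exact hmem'' n
        · show (if n ≤ M' then E' n else ⋃₀ ↑𝒞) ∈ finUnions I.sets ∧
            (if n ≤ M' then E' n else ⋃₀ ↑𝒞) ⊆ B₁
          rw [if_neg hn]
          exact ⟨⟨𝒞, fun C hC => (h𝒞 C hC).1, rfl⟩,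
            Set.sUnion_subset (fun C hC => (h𝒞 C (Finset.mem_coe.mp hC)).2)⟩
      have htailE : ∀ n, M' + 1 ≤ n → E n = ⋃₀ ↑𝒞 := by
        intro n hn
        simp only [hEdef]
        rw [if_neg (by omega)]
      -- lifting of IH recoveries
      have hvv' : ∀ ω : Ω, (fun n => P (E' n) ω) =
          (fun x : ℕ → ℝ => fun n => x (min n M')) (fun n => P (E n) ω) := by
        intro ω
        funext n
        have hmin : min n M' ≤ M' := min_le_right n M'
        have h1 : E (min n M') = E' (min n M') := by simp only [hEdef]; rw [if_pos hmin]
        by_cases hn : n ≤ M'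
        · simp only [min_eq_left hn] at h1 ⊢
          rw [h1]
        · have h2 : min n M' = M' := min_eq_right (by omega)
          simp only [h2] at h1 ⊢
          rw [h1, htail' M' le_rfl, htail' n (by omega)]
      have hRmeas : Measurable (fun x : ℕ → ℝ => fun n => x (min n M')) :=
        measurable_pi_lambda _ (fun n => measurable_pi_apply _)
      have hlift : ∀ {f : Ω → ℝ}, RecOf Pr (fun ω n => P (E' n) ω) f →
          RecOf Pr (fun ω n => P (E n) ω) f :=
        fun h => RecOf.comp_R hRmeas hvv' h
      have hrecW : ∀ S' ∈ 𝒞'.powerset, RecOf Pr (fun ω n => P (E n) ω) (P (⋃₀ ↑S')) :=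
        fun S' hS' => hlift (hrec' S' hS')
      have himg : ∀ S' ∈ 𝒞'.powerset, (S'.image (· ∩ Cm)) ∈ 𝒞'.powerset := by
        intro S' hS'
        rw [Finset.mem_powerset] at hS' ⊢
        intro D hD
        obtain ⟨C, hC, rfl⟩ := Finset.mem_image.mp hD
        exact hinterCm C (hS' hC)
      -- recovery of P (⋃₀ 𝒞) as a coordinate
      have hE1 : E (M' + 1) = ⋃₀ ↑𝒞 := htailE (M' + 1) le_rfl
      have hrecTot : RecOf Pr (fun ω n => P (E n) ω) (P (⋃₀ ↑𝒞)) := by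
        have := recOf_coord (Pr := Pr) (v := fun ω n => P (E n) ω) (M' + 1)
        rw [hE1] at this
        exact this
      have hUUCm : U' ∪ Cm = ⋃₀ ↑𝒞 := by
        conv_rhs => rw [← Finset.insert_erase hCm]
        rw [Finset.coe_insert, Set.sUnion_insert, ← h𝒞'def, Set.union_comm]
      -- recovery of P Cm
      have hrecCm : RecOf Pr (fun ω n => P (E n) ω) (P Cm) := by
        have hmod := hP.modular hU'meas hCmmeas
        have hrecU' : RecOf Pr (fun ω n => P (E n) ω) (P U') :=
          hrecW 𝒞' (Finset.mem_powerset_self _)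
        have hrecInt : RecOf Pr (fun ω n => P (E n) ω) (P (U' ∩ Cm)) := by
          have heq : U' ∩ Cm = ⋃₀ ↑(𝒞'.image (· ∩ Cm)) := sUnion_finset_inter 𝒞' Cm
          rw [heq]
          exact hrecW _ (himg 𝒞' (Finset.mem_powerset_self _))
        have hae : P Cm =ᵐ[Pr] fun ω => (P (⋃₀ ↑𝒞) ω - P U' ω) + P (U' ∩ Cm) ω := by
          filter_upwards [hmod] with ω h
          rw [hUUCm] at h
          linarith
        exact ((hrecTot.sub hrecU').add hrecInt).congr hae.symm
      refine ⟨M' + 1, E, hmonoE, hmemE, htailE, ?_⟩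
      intro S hS
      rw [Finset.mem_powerset] at hS
      by_cases hCmS : Cm ∈ S
      · set S' := S.erase Cm with hS'def
        have hS'mem : S' ∈ 𝒞'.powerset :=
          Finset.mem_powerset.mpr (Finset.erase_subset_erase _ hS)
        have hSU : ⋃₀ ↑S = (⋃₀ ↑S') ∪ Cm := by
          conv_lhs => rw [← Finset.insert_erase hCmS]
          rw [Finset.coe_insert, Set.sUnion_insert, ← hS'def, Set.union_comm]
        have hS'meas : MeasurableSet (⋃₀ (↑S' : Set (Set 𝒳))) :=
          measurableSet_sUnion_finset
            (fun C hC => (h𝒞 C (hmem' C ((Finset.mem_powerset.mp hS'mem) hC))).1)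
        have hmod := hP.modular hS'meas hCmmeas
        have hae : P (⋃₀ ↑S) =ᵐ[Pr]
            fun ω => (P (⋃₀ ↑S') ω + P Cm ω) - P ((⋃₀ ↑S') ∩ Cm) ω := by
          filter_upwards [hmod] with ω h
          rw [hSU]
          linarith
        have hrecInt : RecOf Pr (fun ω n => P (E n) ω) (P ((⋃₀ ↑S') ∩ Cm)) := by
          rw [sUnion_finset_inter]
          exact hrecW _ (himg S' hS'mem)
        exact (((hrecW S' hS'mem).add hrecCm).sub hrecInt).congr hae.symm
      · exact hrecW S (Finset.mem_powerset.mpr (Finset.subset_erase.mpr ⟨hS, hCmS⟩))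

end Stmt6Aux2

section Stmt6Aux3

set_option linter.unusedSectionVars false

variable {𝒳 Ω : Type*} [TopologicalSpace 𝒳] [MeasurableSpace 𝒳] [BorelSpace 𝒳]
  [MeasurableSpace Ω] {I : IndexingCollection 𝒳} {Pr : Measure Ω} {P : Set 𝒳 → Ω → ℝ}

lemma comap_le_sigmaF {A B : Set 𝒳} (hA : A ∈ I.sets) (hsub : A ⊆ B) :
    MeasurableSpace.comap (P A) inferInstance ≤ sigmaF I P B :=
  le_iSup₂ (f := fun (A : Set 𝒳) (_ : A ∈ I.sets ∧ A ⊆ B) =>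
    MeasurableSpace.comap (P A) inferInstance) A ⟨hA, hsub⟩

lemma sigmaF_le (hP : IsRPM Pr P) (B : Set 𝒳) : sigmaF I P B ≤ ‹MeasurableSpace Ω› :=
  iSup₂_le fun A hA => measurable_iff_comap_le.mp (hP.meas A (I.measurableSet_of_mem hA.1))

lemma sigmaF_mono {B B' : Set 𝒳} (hsub : B ⊆ B') : sigmaF I P B ≤ sigmaF I P B' :=
  iSup₂_le fun A hA => comap_le_sigmaF hA.1 (hA.2.trans hsub)

lemma measurable_sigmaF_P {A B : Set 𝒳} (hA : A ∈ I.sets) (hsub : A ⊆ B) :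
    Measurable[sigmaF I P B] (P A) :=
  measurable_iff_comap_le.mpr (comap_le_sigmaF hA hsub)

lemma inter_mem_I {A B : Set 𝒳} (hA : A ∈ I.sets) (hB : B ∈ I.sets) : A ∩ B ∈ I.sets := by
  have h := I.sInter_mem {A, B} (by
    intro C hC
    rcases hC with rfl | rfl
    · exact hA
    · exact hB) ⟨A, by simp⟩
  rwa [Set.sInter_pair] at h

/-- `P B` has a `sigmaF I P B`-measurable version, for every `B ∈ 𝒜(u)`. -/
lemma IsRPM.exists_version (hP : IsRPM Pr P) (I : IndexingCollection 𝒳) {B : Set 𝒳}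
    (hB : B ∈ finUnions I.sets) :
    ∃ g : Ω → ℝ, Measurable[sigmaF I P B] g ∧ P B =ᵐ[Pr] g := by
  classical
  obtain ⟨T, hT, rfl⟩ := hB
  suffices h : ∀ (n : ℕ) (T' : Finset (Set 𝒳)), T'.card ≤ n →
      (↑T' : Set (Set 𝒳)) ⊆ I.sets →
      (∀ A ∈ T', A ⊆ ⋃₀ (↑T : Set (Set 𝒳))) →
      ∃ g, Measurable[sigmaF I P (⋃₀ (↑T : Set (Set 𝒳)))] g ∧
        P (⋃₀ (↑T' : Set (Set 𝒳))) =ᵐ[Pr] g by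
    exact h T.card T le_rfl hT (fun A hA => Set.subset_sUnion_of_mem (Finset.mem_coe.mpr hA))
  intro n
  induction n with
  | zero =>
    intro T' hcard _ _
    have hT' : T' = ∅ := Finset.card_eq_zero.mp (Nat.le_zero.mp hcard)
    subst hT'
    exact ⟨fun _ => 0, @measurable_const ℝ Ω _ (sigmaF I P _) 0, by simpa [Filter.EventuallyEq] using hP.empty_zero⟩
  | succ n ihn =>
    intro T' hcard hT'sub hT'B
    rcases Finset.eq_empty_or_nonempty T' with rfl | ⟨A, hAT'⟩
    · exact ⟨fun _ => 0, @measurable_const ℝ Ω _ (sigmaF I P _) 0, by simpa [Filter.EventuallyEq] using hP.empty_zero⟩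
    · set T'' := T'.erase A with hT''def
      have hAI : A ∈ I.sets := hT'sub (Finset.mem_coe.mpr hAT')
      have hAB : A ⊆ ⋃₀ (↑T : Set (Set 𝒳)) := hT'B A hAT'
      have hT''sub : (↑T'' : Set (Set 𝒳)) ⊆ I.sets :=
        fun C hC => hT'sub (Finset.mem_coe.mpr (Finset.mem_of_mem_erase (Finset.mem_coe.mp hC)))
      have hT''B : ∀ C ∈ T'', C ⊆ ⋃₀ (↑T : Set (Set 𝒳)) :=
        fun C hC => hT'B C (Finset.mem_of_mem_erase hC)
      have hT''card : T''.card ≤ n := by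
        have h1 : T''.card = T'.card - 1 := by
          rw [hT''def]; exact Finset.card_erase_of_mem hAT'
        have h2 : 0 < T'.card := Finset.card_pos.mpr ⟨A, hAT'⟩
        omega
      have hsplit : ⋃₀ (↑T' : Set (Set 𝒳)) = A ∪ ⋃₀ (↑T'' : Set (Set 𝒳)) := by
        conv_lhs => rw [← Finset.insert_erase hAT']
        rw [Finset.coe_insert, Set.sUnion_insert]
      have hAmeas : MeasurableSet A := I.measurableSet_of_mem hAI
      have hT''meas : MeasurableSet (⋃₀ (↑T'' : Set (Set 𝒳))) :=
        measurableSet_sUnion_finset hT''sub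
      -- image family
      set Timg := T''.image (· ∩ A) with hTimgdef
      have hTimgsub : (↑Timg : Set (Set 𝒳)) ⊆ I.sets := by
        intro C hC
        obtain ⟨D, hD, rfl⟩ := Finset.mem_image.mp (Finset.mem_coe.mp hC)
        exact inter_mem_I (hT''sub (Finset.mem_coe.mpr hD)) hAI
      have hTimgB : ∀ C ∈ Timg, C ⊆ ⋃₀ (↑T : Set (Set 𝒳)) := by
        intro C hC
        obtain ⟨D, hD, rfl⟩ := Finset.mem_image.mp hC
        exact Set.inter_subset_left.trans (hT''B D hD)
      have hTimgcard : Timg.card ≤ n := le_trans (Finset.card_image_le) hT''card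
      obtain ⟨g1, hg1meas, hg1ae⟩ := ihn T'' hT''card hT''sub hT''B
      obtain ⟨g2, hg2meas, hg2ae⟩ := ihn Timg hTimgcard hTimgsub hTimgB
      have hgAmeas : Measurable[sigmaF I P (⋃₀ (↑T : Set (Set 𝒳)))] (P A) :=
        measurable_sigmaF_P hAI hAB
      refine ⟨fun ω => P A ω + g1 ω - g2 ω, (hgAmeas.add hg1meas).sub hg2meas, ?_⟩
      have hmod := hP.modular hAmeas hT''meas
      have hint : A ∩ ⋃₀ (↑T'' : Set (Set 𝒳)) = ⋃₀ (↑Timg : Set (Set 𝒳)) := by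
        rw [Set.inter_comm, sUnion_finset_inter]
      filter_upwards [hmod, hg1ae, hg2ae] with ω h1 h2 h3
      rw [hsplit, h1, hint, h2, h3]

/-- The σ-algebra generated by all chain variables except `i₀`. -/
def sigmaK {Ω : Type*} [MeasurableSpace Ω] {n : ℕ} (Y : Fin n → Ω → ℝ) (i₀ : Fin n) :
    MeasurableSpace Ω :=
  ⨆ i ∈ ({i₀}ᶜ : Set (Fin n)), MeasurableSpace.comap (Y i) inferInstance

/-- transfer of independence along an a.e. modification of the function generating the
first σ-algebra. -/
lemma indep_congr_comap {f f' : Ω → ℝ} {m' : MeasurableSpace Ω} [IsProbabilityMeasure Pr]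
    (h : Indep (MeasurableSpace.comap f inferInstance) m' Pr) (hff' : f =ᵐ[Pr] f') :
    Indep (MeasurableSpace.comap f' inferInstance) m' Pr := by
  rw [Indep_iff] at h ⊢
  intro t1 t2 ht1 ht2
  obtain ⟨Γ, hΓ, rfl⟩ := ht1
  have hsets : (f' ⁻¹' Γ : Set Ω) =ᵐ[Pr] (f ⁻¹' Γ : Set Ω) := by
    rw [Filter.eventuallyEq_set]
    filter_upwards [hff'] with ω hω
    simp [Set.mem_preimage, hω]
  calc Pr (f' ⁻¹' Γ ∩ t2) = Pr (f ⁻¹' Γ ∩ t2) :=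
        measure_congr (hsets.inter (Filter.EventuallyEq.refl _ _))
    _ = Pr (f ⁻¹' Γ) * Pr t2 := h _ t2 ⟨Γ, hΓ, rfl⟩ ht2
    _ = Pr (f' ⁻¹' Γ) * Pr t2 := by rw [measure_congr hsets]

/-- Assembling independent increments along a filtration into joint independence. -/
lemma iIndepFun_of_filtration {k : ℕ} [IsProbabilityMeasure Pr]
    (F : Fin (k+1) → MeasurableSpace Ω)
    (hFmono : ∀ i j : Fin (k+1), i ≤ j → F i ≤ F j)
    (X : Fin (k+1) → Ω → ℝ) (hXmeas : ∀ i, Measurable[F i] (X i))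
    (hXle : ∀ i, Measurable (X i))
    (hXindep : ∀ j : Fin k, Indep (MeasurableSpace.comap (X j.succ) inferInstance)
      (F j.castSucc) Pr) :
    iIndepFun X Pr := by
  classical
  rw [iIndepFun_iff_measure_inter_preimage_eq_mul]
  intro S sets hsets
  revert hsets
  induction S using Finset.induction_on_max with
  | empty => intro _; simp
  | insert a S hlt ih =>
    intro hsets
    rcases Finset.eq_empty_or_nonempty S with rfl | hSne
    · simp
    · have ha0 : a ≠ 0 := by
        obtain ⟨x, hx⟩ := hSne
        have := hlt x hx
        exact fun h => by subst h; exact absurd this (by simp [Fin.lt_iff_val_lt_val])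
      obtain ⟨j, rfl⟩ : ∃ j : Fin k, a = j.succ := ⟨a.pred ha0, (Fin.succ_pred a ha0).symm⟩
      have haS : j.succ ∉ S := fun h => absurd (hlt _ h) (lt_irrefl _)
      rw [Finset.set_biInter_insert, Finset.prod_insert haS]
      have hrest_meas : MeasurableSet[F j.castSucc] (⋂ i ∈ S, X i ⁻¹' sets i) := by
        refine Finset.measurableSet_biInter _ fun i hi => ?_
        have hij : i ≤ j.castSucc := by
          have h1 := hlt i hi
          rw [Fin.lt_iff_val_lt_val, Fin.val_succ] at h1
          rw [Fin.le_iff_val_le_val, Fin.coe_castSucc]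
          omega
        exact ((hXmeas i).mono (hFmono i j.castSucc hij) le_rfl)
          (hsets i (Finset.mem_insert_of_mem hi))
      have hXa : MeasurableSet[MeasurableSpace.comap (X j.succ) inferInstance]
          (X j.succ ⁻¹' sets j.succ) :=
        ⟨sets j.succ, hsets _ (Finset.mem_insert_self _ _), rfl⟩
      have hmul := (Indep_iff _ _ _).mp (hXindep j) _ _ hXa hrest_meas
      rw [hmul, ih (fun i hi => hsets i (Finset.mem_insert_of_mem hi))]

/-- joint independence is preserved by a.e. modifications. -/
lemma iIndepFun_congr_ae {k : ℕ} {X Y : Fin (k+1) → Ω → ℝ}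
    (h : ∀ i, X i =ᵐ[Pr] Y i) (hX : iIndepFun X Pr) :
    iIndepFun Y Pr := by
  rw [iIndepFun_iff_measure_inter_preimage_eq_mul] at hX ⊢
  intro S sets hsets
  have hall : ∀ᵐ ω ∂Pr, ∀ i, X i ω = Y i ω := ae_all_iff.mpr h
  have hIeq : (⋂ i ∈ S, Y i ⁻¹' sets i : Set Ω) =ᵐ[Pr] (⋂ i ∈ S, X i ⁻¹' sets i : Set Ω) := by
    rw [Filter.eventuallyEq_set]
    filter_upwards [hall] with ω hω
    simp only [Set.mem_iInter₂, Set.mem_preimage]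
    exact forall₂_congr fun i _ => by rw [hω i]
  rw [measure_congr hIeq, hX S hsets]
  refine Finset.prod_congr rfl fun i _ => measure_congr ?_
  rw [Filter.eventuallyEq_set]
  filter_upwards [h i] with ω hω
  simp [Set.mem_preimage, hω]

end Stmt6Aux3

/-- A random probability measure is neutral to the right iff for every
`B₁ ⊆ B₂` in `𝒜(u)`, `V_{B₁B₂}` is independent of `ℱ_{B₁}`. -/
theorem stmt6 (I : IndexingCollection 𝒳) (Pr : Measure Ω) [IsProbabilityMeasure Pr]
    (P : Set 𝒳 → Ω → ℝ) (hP : IsRPM Pr P) :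
    IsNTR I Pr P ↔
      ∀ B₁ B₂, B₁ ∈ finUnions I.sets → B₂ ∈ finUnions I.sets → B₁ ⊆ B₂ →
        Indep (MeasurableSpace.comap (Vr P B₁ B₂) inferInstance) (sigmaF I P B₁) Pr := by
  classical
  constructor
  · intro hntr B₁ B₂ hB₁ hB₂ hsub
    have hB₁meas : MeasurableSet B₁ := finUnions_measurableSet hB₁
    have hB₂meas : MeasurableSet B₂ := finUnions_measurableSet hB₂
    have hVmeas : Measurable (Vr P B₁ B₂) :=
      measurable_Vr (hP.meas _ hB₁meas) (hP.meas _ hB₂meas)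
    set SA : Set (Set 𝒳) := {A | A ∈ I.sets ∧ A ⊆ B₁} with hSAdef
    set msA : Set 𝒳 → MeasurableSpace Ω :=
      fun A => MeasurableSpace.comap (P A) inferInstance with hmsAdef
    have hsigmaF_eq : sigmaF I P B₁ = ⨆ A ∈ SA, msA A := rfl
    set p1 : Set (Set Ω) := {t | ∃ s : Set ℝ, MeasurableSet s ∧ Vr P B₁ B₂ ⁻¹' s = t}
      with hp1def
    set p2 : Set (Set Ω) := piiUnionInter (fun A => {s | MeasurableSet[msA A] s}) SA with hp2def
    refine ProbabilityTheory.IndepSets.indep (p1 := p1) (p2 := p2)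
      (measurable_iff_comap_le.mp hVmeas) (sigmaF_le hP B₁) ?_ ?_ ?_ ?_ ?_
    · rintro s ⟨Γ₁, h₁, rfl⟩ t ⟨Γ₂, h₂, rfl⟩ _
      exact ⟨Γ₁ ∩ Γ₂, h₁.inter h₂, by rw [Set.preimage_inter]⟩
    · exact isPiSystem_piiUnionInter _
        (fun A => @MeasurableSpace.isPiSystem_measurableSet Ω (msA A)) _
    · exact MeasurableSpace.comap_eq_generateFrom _ _
    · rw [hsigmaF_eq]
      exact (generateFrom_piiUnionInter_measurableSet msA SA).symm
    · -- the π-system independence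
      rw [IndepSets_iff]
      rintro t1 t2 ⟨Γ, hΓ, rfl⟩ ⟨Fst, hFS, fev, hfev, rfl⟩
      have hfev' : ∀ A ∈ Fst, ∃ Γ', MeasurableSet Γ' ∧ P A ⁻¹' Γ' = fev A := by
        intro A hA
        exact MeasurableSpace.measurableSet_comap.mp (hfev A hA)
      choose! Γ' hΓ'meas hΓ'pre using hfev'
      -- the ∩-closed family generated by Fst
      set 𝒞 : Finset (Set 𝒳) := (Fst.powerset.filter (fun s => s.Nonempty)).image
        (fun s : Finset (Set 𝒳) => ⋂₀ (↑s : Set (Set 𝒳))) with h𝒞def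
      have h𝒞mem : ∀ C ∈ 𝒞, C ∈ I.sets ∧ C ⊆ B₁ := by
        intro C hC
        obtain ⟨s, hs, rfl⟩ := Finset.mem_image.mp hC
        obtain ⟨hs1, hs2⟩ := Finset.mem_filter.mp hs
        have hssub : s ⊆ Fst := Finset.mem_powerset.mp hs1
        constructor
        · refine I.sInter_mem _ (fun D hD => (hFS (hssub (Finset.mem_coe.mp hD))).1)
            (Finset.coe_nonempty.mpr hs2)
        · obtain ⟨a, ha⟩ := hs2
          exact (Set.sInter_subset_of_mem (Finset.mem_coe.mpr ha)).trans
            (hFS (hssub ha)).2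
      have h𝒞inter : ∀ C₁ ∈ 𝒞, ∀ C₂ ∈ 𝒞, C₁ ∩ C₂ ∈ 𝒞 := by
        intro C₁ h₁ C₂ h₂
        obtain ⟨s₁, hs₁, rfl⟩ := Finset.mem_image.mp h₁
        obtain ⟨s₂, hs₂, rfl⟩ := Finset.mem_image.mp h₂
        obtain ⟨hs₁p, hs₁n⟩ := Finset.mem_filter.mp hs₁
        obtain ⟨hs₂p, hs₂n⟩ := Finset.mem_filter.mp hs₂
        refine Finset.mem_image.mpr ⟨s₁ ∪ s₂, Finset.mem_filter.mpr ⟨?_, ?_⟩, ?_⟩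
        · exact Finset.mem_powerset.mpr (Finset.union_subset
            (Finset.mem_powerset.mp hs₁p) (Finset.mem_powerset.mp hs₂p))
        · obtain ⟨a, ha⟩ := hs₁n; exact ⟨a, Finset.mem_union_left _ ha⟩
        · rw [Finset.coe_union, Set.sInter_union]
      have hF𝒞 : ∀ A ∈ Fst, A ∈ 𝒞 := by
        intro A hA
        refine Finset.mem_image.mpr ⟨{A}, Finset.mem_filter.mpr
          ⟨Finset.mem_powerset.mpr (Finset.singleton_subset_iff.mpr hA), ⟨A, by simp⟩⟩, ?_⟩
        rw [Finset.coe_singleton, Set.sInter_singleton]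
      obtain ⟨M, E, hEmono, hEmem, hEtail, hrec⟩ := hP.key I 𝒞 h𝒞mem h𝒞inter
      have hEmeas : ∀ n, MeasurableSet (E n) := fun n => finUnions_measurableSet (hEmem n).1
      -- the NTR chain
      set Bt : Fin (M+2+1) → Set 𝒳 :=
        fun i => if (i:ℕ) ≤ M then E i else if (i:ℕ) = M+1 then B₁ else B₂ with hBtdef
      have hBtE : ∀ x : Fin (M+2+1), (x:ℕ) ≤ M → Bt x = E (x:ℕ) := by
        intro x hx; simp only [hBtdef]; rw [if_pos hx]
      have hBtB₁ : ∀ x : Fin (M+2+1), (x:ℕ) = M+1 → Bt x = B₁ := by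
        intro x hx; simp only [hBtdef]; rw [if_neg (by omega), if_pos hx]
      have hBtB₂ : ∀ x : Fin (M+2+1), (x:ℕ) = M+2 → Bt x = B₂ := by
        intro x hx; simp only [hBtdef]; rw [if_neg (by omega), if_neg (by omega)]
      have hBtmem : ∀ i, Bt i ∈ finUnions I.sets := by
        intro i; simp only [hBtdef]
        split_ifs
        exacts [(hEmem i).1, hB₁, hB₂]
      have hBtmono : ∀ i j : Fin (M+2+1), i ≤ j → Bt i ⊆ Bt j := by
        intro i j hij
        rw [Fin.le_iff_val_le_val] at hij
        by_cases hi : (i:ℕ) ≤ M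
        · rw [hBtE i hi]
          by_cases hj : (j:ℕ) ≤ M
          · rw [hBtE j hj]; exact hEmono hij
          · by_cases hj2 : (j:ℕ) = M+1
            · rw [hBtB₁ j hj2]; exact (hEmem i).2
            · rw [hBtB₂ j (by omega)]; exact (hEmem i).2.trans hsub
        · by_cases hi2 : (i:ℕ) = M+1
          · rw [hBtB₁ i hi2]
            by_cases hj : (j:ℕ) ≤ M
            · omega
            · by_cases hj2 : (j:ℕ) = M+1
              · rw [hBtB₁ j hj2]
              · rw [hBtB₂ j (by omega)]; exact hsub
          · have hiv : (i:ℕ) = M+2 := by have := i.isLt; omega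
            have hjv : (j:ℕ) = M+2 := by have := j.isLt; omega
            rw [hBtB₂ i hiv, hBtB₂ j hjv]
      have hiIndep := hntr (M+2) Bt hBtmem hBtmono
      set Y : Fin (M+2+1) → Ω → ℝ := fun i => Fin.cases (motive := fun _ => Ω → ℝ) (P (Bt 0))
        (fun i' : Fin (M+2) => Vr P (Bt i'.castSucc) (Bt i'.succ)) i with hYdef
      have hY0 : Y 0 = P (Bt 0) := by simp [hYdef]
      have hYsucc : ∀ j : Fin (M+2), Y j.succ = Vr P (Bt j.castSucc) (Bt j.succ) := by
        intro j; simp [hYdef]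
      have hYmeas : ∀ i, Measurable (Y i) := by
        intro i
        induction i using Fin.cases with
        | zero => rw [hY0]; exact hP.meas _ (finUnions_measurableSet (hBtmem 0))
        | succ j =>
          rw [hYsucc j]
          exact measurable_Vr (hP.meas _ (finUnions_measurableSet (hBtmem _)))
            (hP.meas _ (finUnions_measurableSet (hBtmem _)))
      have hYind : iIndep (fun i => MeasurableSpace.comap (Y i) inferInstance) Pr :=
        hiIndep.iIndep
      have hbsup := indep_biSup_compl
        (fun i => measurable_iff_comap_le.mp (hYmeas i)) hYind {Fin.last (M+2)}
      have hleft : (⨆ i ∈ ({Fin.last (M+2)} : Set (Fin (M+2+1))),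
          MeasurableSpace.comap (Y i) inferInstance)
          = MeasurableSpace.comap (Y (Fin.last (M+2))) inferInstance := by
        simp
      have h𝒦def : sigmaK Y (Fin.last (M+2)) = ⨆ i ∈ ({Fin.last (M+2)}ᶜ : Set (Fin (M+2+1))),
        MeasurableSpace.comap (Y i) inferInstance := rfl
      have hYlast : Y (Fin.last (M+2)) = Vr P B₁ B₂ := by
        have h1 : Fin.last (M+2) = (Fin.last (M+1)).succ := (Fin.succ_last (M+1)).symm
        rw [h1, hYsucc]
        have h2 : Bt (Fin.last (M+1)).castSucc = B₁ := hBtB₁ _ (by simp)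
        have h3 : Bt (Fin.last (M+1)).succ = B₂ := hBtB₂ _ (by simp)
        rw [h2, h3]
      have hVK : Indep (MeasurableSpace.comap (Vr P B₁ B₂) inferInstance) (sigmaK Y (Fin.last (M+2))) Pr := by
        rw [h𝒦def, ← hYlast, ← hleft]
        exact hbsup
      have hcomap_le_𝒦 : ∀ i : Fin (M+2+1), i ≠ Fin.last (M+2) →
          MeasurableSpace.comap (Y i) inferInstance ≤ sigmaK Y (Fin.last (M+2)) := by
        intro i hi
        rw [h𝒦def]
        exact le_iSup₂ (f := fun (i : Fin (M+2+1)) (_ : i ∈ ({Fin.last (M+2)}ᶜ :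
          Set (Fin (M+2+1)))) => MeasurableSpace.comap (Y i) inferInstance) i
          (Set.mem_compl_singleton_iff.mpr hi)
      -- the chain variables and the stick-breaking reconstruction
      set Z : ℕ → Ω → ℝ := fun n => if n = 0 then P (E 0) else Vr P (E (n-1)) (E n) with hZdef
      set hf : ℕ → Ω → ℝ := fun n => Nat.rec (P (E 0))
        (fun m hm => if m + 1 ≤ M then (fun ω => hm ω + Z (m+1) ω * (1 - hm ω)) else hm) n
        with hfdef
      have hf0 : hf 0 = P (E 0) := rfl
      have hfsucc : ∀ m : ℕ, hf (m+1) =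
          if m + 1 ≤ M then (fun ω => hf m ω + Z (m+1) ω * (1 - hf m ω)) else hf m :=
        fun m => rfl
      have hZ0 : Z 0 = P (E 0) := by simp [hZdef]
      have hZsucc : ∀ m : ℕ, Z (m+1) = Vr P (E m) (E (m+1)) := by
        intro m; simp [hZdef]
      have hZY : ∀ n : ℕ, n ≤ M → ∃ i : Fin (M+2+1), i ≠ Fin.last (M+2) ∧ Z n = Y i := by
        intro n hn
        rcases n with _ | m
        · refine ⟨0, ?_, ?_⟩
          · intro hc
            have : (0 : ℕ) = M + 2 := by
              have := congrArg Fin.val hc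
              simpa using this
            omega
          · rw [hZ0, hY0, hBtE 0 (by simp)]
            simp
        · have hm2 : m < M + 2 := by omega
          refine ⟨(⟨m, hm2⟩ : Fin (M+2)).succ, ?_, ?_⟩
          · intro hc
            have := congrArg Fin.val hc
            simp [Fin.val_succ, Fin.val_last] at this
            omega
          · rw [hZsucc, hYsucc]
            have hc1 : Bt (⟨m, hm2⟩ : Fin (M+2)).castSucc = E m := by
              rw [hBtE _ (by simp [Fin.coe_castSucc]; omega)]
              simp
            have hc2 : Bt (⟨m, hm2⟩ : Fin (M+2)).succ = E (m+1) := by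
              rw [hBtE _ (by simp [Fin.val_succ]; omega)]
              simp
            rw [hc1, hc2]
      have hZK : ∀ n : ℕ, n ≤ M → Measurable[sigmaK Y (Fin.last (M+2))] (Z n) := by
        intro n hn
        obtain ⟨i, hi, heq⟩ := hZY n hn
        rw [heq]
        have h1 : Measurable[MeasurableSpace.comap (Y i) inferInstance] (Y i) :=
          measurable_iff_comap_le.mpr le_rfl
        exact h1.mono (hcomap_le_𝒦 i hi) le_rfl
      have hhfK : ∀ n, Measurable[sigmaK Y (Fin.last (M+2))] (hf n) := by
        intro n
        induction n with
        | zero =>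
          rw [hf0, ← hZ0]
          exact hZK 0 (by omega)
        | succ m ih =>
          rw [hfsucc m]
          split_ifs with hm
          · exact ih.add ((hZK (m+1) hm).mul (measurable_const.sub ih))
          · exact ih
      have hhfae : ∀ n, P (E n) =ᵐ[Pr] hf n := by
        intro n
        induction n with
        | zero => rw [hf0]
        | succ m ih =>
          rw [hfsucc m]
          split_ifs with hm
          · have hrec2 := hP.vr_rec (hEmeas m) (hEmeas (m+1)) (hEmono (by omega))
            filter_upwards [hrec2, ih] with ω h1 h2
            rw [hZsucc, ← h2]
            exact h1
          · rw [hEtail (m+1) (by omega), ← hEtail m (by omega)]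
            exact ih
      -- recoveries of `P A` for `A ∈ Fst`
      have hrecA : ∀ A ∈ Fst, ∃ G : (ℕ → ℝ) → ℝ, Measurable G ∧
          P A =ᵐ[Pr] fun ω => G (fun n => P (E n) ω) := by
        intro A hA
        have h1 := hrec {A} (Finset.mem_powerset.mpr
          (Finset.singleton_subset_iff.mpr (hF𝒞 A hA)))
        simpa [RecOf] using h1
      choose! GA hGAmeas hGAae using hrecA
      have hgAK : ∀ A ∈ Fst, Measurable[sigmaK Y (Fin.last (M+2))]
          (fun ω => GA A (fun n => hf n ω)) := by
        intro A hA
        letI : MeasurableSpace Ω := sigmaK Y (Fin.last (M+2))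
        exact (hGAmeas A hA).comp (measurable_pi_lambda _ (fun n => hhfK n))
      have hgAae : ∀ A ∈ Fst, P A =ᵐ[Pr] (fun ω => GA A (fun n => hf n ω)) := by
        intro A hA
        have hvec : ∀ᵐ ω ∂Pr, ∀ n, P (E n) ω = hf n ω := ae_all_iff.mpr hhfae
        filter_upwards [hGAae A hA, hvec] with ω h1 h2
        rw [h1]
        congr 1
        funext n
        exact h2 n
      set t2' : Set Ω := ⋂ A ∈ Fst, (fun ω => GA A (fun n => hf n ω)) ⁻¹' (Γ' A) with ht2'def
      have ht2'meas : MeasurableSet[sigmaK Y (Fin.last (M+2))] t2' := by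
        letI : MeasurableSpace Ω := sigmaK Y (Fin.last (M+2))
        exact Finset.measurableSet_biInter _ (fun A hA => (hgAK A hA) (hΓ'meas A hA))
      have ht2ae : (⋂ A ∈ Fst, fev A : Set Ω) =ᵐ[Pr] t2' := by
        rw [Filter.eventuallyEq_set]
        have hball : ∀ᵐ ω ∂Pr, ∀ A ∈ Fst, P A ω = GA A (fun n => hf n ω) := by
          rw [Filter.eventually_all_finset]
          exact hgAae
        filter_upwards [hball] with ω hω
        simp only [Set.mem_iInter₂, Set.mem_preimage, ht2'def]
        refine forall₂_congr fun A hA => ?_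
        rw [← hΓ'pre A hA]
        simp [Set.mem_preimage, hω A hA]
      have hfact := (Indep_iff _ _ _).mp hVK (Vr P B₁ B₂ ⁻¹' Γ) t2' ⟨Γ, hΓ, rfl⟩ ht2'meas
      calc Pr (Vr P B₁ B₂ ⁻¹' Γ ∩ ⋂ A ∈ Fst, fev A)
          = Pr (Vr P B₁ B₂ ⁻¹' Γ ∩ t2') :=
            measure_congr ((Filter.EventuallyEq.refl _ _).inter ht2ae)
        _ = Pr (Vr P B₁ B₂ ⁻¹' Γ) * Pr t2' := hfact
        _ = Pr (Vr P B₁ B₂ ⁻¹' Γ) * Pr (⋂ A ∈ Fst, fev A) := by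
            rw [measure_congr ht2ae]

  · intro h k B hBmem hBmono
    have hcs : ∀ j : Fin k, (j.castSucc : Fin (k+1)) ≤ j.succ := by
      intro j
      rw [Fin.le_iff_val_le_val, Fin.coe_castSucc, Fin.val_succ]
      omega
    have hver : ∀ i : Fin (k+1), ∃ g, Measurable[sigmaF I P (B i)] g ∧ P (B i) =ᵐ[Pr] g :=
      fun i => hP.exists_version I (hBmem i)
    choose g hgmeas hgae using hver
    set X : Fin (k+1) → Ω → ℝ := fun i =>
      Fin.cases (motive := fun _ => Ω → ℝ) (g 0)
        (fun j => fun ω => vrf (g j.castSucc ω) (g j.succ ω)) i with hXdef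
    have hX0 : X 0 = g 0 := by simp [hXdef]
    have hXsucc : ∀ j : Fin k, X j.succ = fun ω => vrf (g j.castSucc ω) (g j.succ ω) := by
      intro j; rw [hXdef]; simp
    have hXmeas : ∀ i, Measurable[sigmaF I P (B i)] (X i) := by
      intro i
      induction i using Fin.cases with
      | zero => rw [hX0]; exact hgmeas 0
      | succ j =>
        rw [hXsucc j]
        have h1 : Measurable[sigmaF I P (B j.succ)] (g j.castSucc) :=
          (hgmeas j.castSucc).mono (sigmaF_mono (hBmono _ _ (hcs j))) le_rfl
        exact measurable_vrf.comp (h1.prodMk (hgmeas j.succ))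
    have hXle : ∀ i, Measurable (X i) :=
      fun i => (hXmeas i).mono (sigmaF_le hP (B i)) le_rfl
    have hXae : ∀ i : Fin (k+1),
        (Fin.cases (motive := fun _ => Ω → ℝ) (P (B 0))
          (fun i' : Fin k => Vr P (B i'.castSucc) (B i'.succ)) i) =ᵐ[Pr] X i := by
      intro i
      induction i using Fin.cases with
      | zero =>
        rw [hX0]
        simpa using hgae 0
      | succ j =>
        rw [hXsucc j]
        have h1 := hgae j.castSucc
        have h2 := hgae j.succ
        simp only [Fin.cases_succ]
        filter_upwards [h1, h2] with ω hω1 hω2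
        rw [Vr_eq_vrf, hω1, hω2]
    have hXindep : ∀ j : Fin k, Indep (MeasurableSpace.comap (X j.succ) inferInstance)
        (sigmaF I P (B j.castSucc)) Pr := by
      intro j
      have hpair := h (B j.castSucc) (B j.succ) (hBmem _) (hBmem _) (hBmono _ _ (hcs j))
      refine indep_congr_comap hpair ?_
      have h1 := hXae j.succ
      simp only [Fin.cases_succ] at h1
      exact h1
    have hXind := iIndepFun_of_filtration (Pr := Pr) (fun i => sigmaF I P (B i))
      (fun i j hij => sigmaF_mono (hBmono i j hij)) X hXmeas hXle hXindep
    exact iIndepFun_congr_ae (fun i => (hXae i).symm) hXind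
end

section
/- For each pair B₁⊆B₂ in 𝒜(u) let F_{B₁B₂} be a probability measure on [0,1], and define the kernels Q_{B₁B₂}(z₁;Γ₂):=F_{B₁B₂}((Γ₂−z₁)/(1−z₁)) for z₁<1 and Q_{B₁B₂}(1;·):=δ₁. Then (F_{B₁B₂})_{B₁⊆B₂} is a neutral to the right system (i.e. for all B₁⊆B₂⊆B₃ in 𝒜(u) and Borel Γ⊆[0,1], F_{B₁B₃}(Γ)=∫_{[0,1]²} 1_Γ(y+z−yz) F_{B₂B₃}(dz) F_{B₁B₂}(dy)) if and only if (Q_{B₁B₂})_{B₁⊆B₂} is a transition system (i.e. it satisfies the Chapman–Kolmogorov equations Q_{B₁B₃}(z₁;Γ₃)=∫_{[0,1]} Q_{B₂B₃}(z₂;Γ₃) Q_{B₁B₂}(z₁;dz₂) for all B₁⊆B₂⊆B₃ in 𝒜(u), z₁∈[0,1] and Borel Γ₃⊆[0,1]). -/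
open MeasureTheory ProbabilityTheory Set
open scoped ENNReal Classical BigOperators

variable {𝒳 Ω : Type*} [TopologicalSpace 𝒳] [MeasurableSpace 𝒳] [BorelSpace 𝒳]
  [MeasurableSpace Ω]

/-- The affine map `t ↦ z + t*(1-z)`, inverse of `t ↦ (t-z)/(1-z)`. -/
noncomputable def ggs8 (z t : ℝ) : ℝ := z + t * (1 - z)

lemma ggs8_meas (z : ℝ) : Measurable (ggs8 z) := by
  unfold ggs8; exact measurable_const.add (measurable_id.mul_const _)

lemma ggs8_mem {z t : ℝ} (hz : z ∈ Set.Icc (0:ℝ) 1) (ht : t ∈ Set.Icc (0:ℝ) 1) :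
    ggs8 z t ∈ Set.Icc (0:ℝ) 1 := by
  obtain ⟨hz0, hz1⟩ := hz; obtain ⟨ht0, ht1⟩ := ht
  unfold ggs8
  constructor
  · nlinarith
  · nlinarith

lemma ind_comp_s8 (Γ : Set ℝ) (f : ℝ → ℝ) (t : ℝ) :
    Γ.indicator (fun _ => (1:ℝ≥0∞)) (f t) = (f ⁻¹' Γ).indicator (fun _ => (1:ℝ≥0∞)) t := by
  by_cases h : f t ∈ Γ <;> simp [h]

lemma setLint_ind_s8 (μ : Measure ℝ) {S : Set ℝ} (hS : MeasurableSet S) :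
    ∫⁻ t in Set.Icc (0:ℝ) 1, S.indicator (fun _ => (1:ℝ≥0∞)) t ∂μ = μ (S ∩ Set.Icc 0 1) := by
  rw [lintegral_indicator_const hS, one_mul, Measure.restrict_apply hS]

lemma F_inter_s8 {F : Measure ℝ} [IsProbabilityMeasure F]
    (hFsupp : F (Set.Icc (0:ℝ) 1) = 1) (Γ : Set ℝ) :
    F (Γ ∩ Set.Icc (0:ℝ) 1) = F Γ := by
  apply measure_inter_conull
  rw [measure_compl (measurableSet_Icc (a := (0:ℝ)) (b := 1)) (measure_ne_top F _),
    hFsupp, measure_univ, tsub_self]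

lemma Qeq_s8 {F : Measure ℝ} {Q : Kernel ℝ ℝ}
    [IsProbabilityMeasure F] (hFsupp : F (Set.Icc (0:ℝ) 1) = 1)
    (h1 : ∀ z : ℝ, 0 ≤ z → z < 1 → ∀ Γ : Set ℝ, MeasurableSet Γ →
      Q z Γ = F (((fun t => (t - z) / (1 - z)) '' Γ) ∩ Set.Icc 0 1))
    (h2 : Q 1 = Measure.dirac 1)
    {z : ℝ} (hz : z ∈ Set.Icc (0:ℝ) 1) {Γ : Set ℝ} (hΓ : MeasurableSet Γ) :
    Q z Γ = ∫⁻ t in Set.Icc (0:ℝ) 1, Γ.indicator (fun _ => (1:ℝ≥0∞)) (ggs8 z t) ∂F := by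
  rcases lt_or_eq_of_le hz.2 with hlt | heq
  · rw [h1 z hz.1 hlt Γ hΓ]
    have hne : (1 : ℝ) - z ≠ 0 := by linarith
    have himg : ((fun t => (t - z) / (1 - z)) '' Γ) = ggs8 z ⁻¹' Γ := by
      ext s
      simp only [Set.mem_image, Set.mem_preimage]
      constructor
      · rintro ⟨t, htΓ, rfl⟩
        have h : ggs8 z ((t - z) / (1 - z)) = t := by unfold ggs8; field_simp; ring
        rwa [h]
      · intro hs
        refine ⟨ggs8 z s, hs, ?_⟩
        unfold ggs8; field_simp; ring
    rw [himg]
    simp only [ind_comp_s8 Γ (ggs8 z)]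
    rw [setLint_ind_s8 F ((ggs8_meas z) hΓ)]
  · subst heq
    rw [h2, Measure.dirac_apply' _ hΓ]
    have hc : ∀ t : ℝ, ggs8 1 t = 1 := fun t => by unfold ggs8; ring
    simp only [hc]
    rw [setLIntegral_const, hFsupp, mul_one]
    by_cases h : (1:ℝ) ∈ Γ <;> simp [h]

lemma Qrestrict_s8 {F : Measure ℝ} {Q : Kernel ℝ ℝ}
    [IsProbabilityMeasure F] (hFsupp : F (Set.Icc (0:ℝ) 1) = 1)
    (h1 : ∀ z : ℝ, 0 ≤ z → z < 1 → ∀ Γ : Set ℝ, MeasurableSet Γ →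
      Q z Γ = F (((fun t => (t - z) / (1 - z)) '' Γ) ∩ Set.Icc 0 1))
    (h2 : Q 1 = Measure.dirac 1)
    {z : ℝ} (hz : z ∈ Set.Icc (0:ℝ) 1) :
    (Q z).restrict (Set.Icc (0:ℝ) 1) = (F.restrict (Set.Icc (0:ℝ) 1)).map (ggs8 z) := by
  ext S hS
  rw [Measure.restrict_apply hS, Measure.map_apply (ggs8_meas z) hS,
    Measure.restrict_apply ((ggs8_meas z) hS),
    Qeq_s8 hFsupp h1 h2 hz (hS.inter measurableSet_Icc),
    ← setLint_ind_s8 F ((ggs8_meas z) hS)]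
  apply setLIntegral_congr_fun measurableSet_Icc
  intro t ht; beta_reduce
  have hmem : ggs8 z t ∈ Set.Icc (0:ℝ) 1 := ggs8_mem hz ht
  rw [← ind_comp_s8 S (ggs8 z) t]
  by_cases h : ggs8 z t ∈ S
  · simp [Set.indicator, h, hmem]
  · simp [Set.indicator, h]

lemma lint_change_s8 {F : Measure ℝ} {Q : Kernel ℝ ℝ}
    [IsProbabilityMeasure F] (hFsupp : F (Set.Icc (0:ℝ) 1) = 1)
    (h1 : ∀ z : ℝ, 0 ≤ z → z < 1 → ∀ Γ : Set ℝ, MeasurableSet Γ →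
      Q z Γ = F (((fun t => (t - z) / (1 - z)) '' Γ) ∩ Set.Icc 0 1))
    (h2 : Q 1 = Measure.dirac 1)
    {z : ℝ} (hz : z ∈ Set.Icc (0:ℝ) 1) {f : ℝ → ℝ≥0∞} (hf : Measurable f) :
    ∫⁻ z₂ in Set.Icc (0:ℝ) 1, f z₂ ∂(Q z)
      = ∫⁻ y in Set.Icc (0:ℝ) 1, f (ggs8 z y) ∂F := by
  calc ∫⁻ z₂ in Set.Icc (0:ℝ) 1, f z₂ ∂(Q z)
      = ∫⁻ z₂, f z₂ ∂((F.restrict (Set.Icc (0:ℝ) 1)).map (ggs8 z)) := by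
        rw [← Qrestrict_s8 hFsupp h1 h2 hz]
    _ = ∫⁻ y, f (ggs8 z y) ∂(F.restrict (Set.Icc (0:ℝ) 1)) :=
        lintegral_map hf (ggs8_meas z)
    _ = _ := rfl

/-- With `Q_{B₁B₂}(z₁;·) = F_{B₁B₂}((· - z₁)/(1 - z₁))` for `z₁ < 1` and
`Q_{B₁B₂}(1;·) = δ₁`, the family `(F_{B₁B₂})` is a neutral to the right system iff
`(Q_{B₁B₂})` is a transition system. -/
theorem stmt8 (I : IndexingCollection 𝒳)
    (F : Set 𝒳 → Set 𝒳 → Measure ℝ)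
    (hFprob : ∀ B₁ B₂, IsProbabilityMeasure (F B₁ B₂))
    (hFsupp : ∀ B₁ B₂, F B₁ B₂ (Set.Icc (0:ℝ) 1) = 1)
    (Q : Set 𝒳 → Set 𝒳 → Kernel ℝ ℝ) [∀ B₁ B₂, IsMarkovKernel (Q B₁ B₂)]
    (hQ : ∀ B₁ B₂, B₁ ∈ finUnions I.sets → B₂ ∈ finUnions I.sets → B₁ ⊆ B₂ →
      (∀ z₁ : ℝ, 0 ≤ z₁ → z₁ < 1 → ∀ Γ : Set ℝ, MeasurableSet Γ →
        Q B₁ B₂ z₁ Γ = F B₁ B₂ (((fun t => (t - z₁) / (1 - z₁)) '' Γ) ∩ Set.Icc 0 1)) ∧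
      Q B₁ B₂ 1 = Measure.dirac 1) :
    IsNTRSystem I F ↔ IsTransitionSystem I Q := by
  constructor
  · -- NTR system → transition system
    intro hN
    constructor
    · -- each kernel gives mass one to [0,1]
      intro B₁ B₂ h₁ h₂ h₁₂ z hz
      have := hFprob B₁ B₂
      rw [Qeq_s8 (hFsupp B₁ B₂) (hQ B₁ B₂ h₁ h₂ h₁₂).1 (hQ B₁ B₂ h₁ h₂ h₁₂).2 hz
        measurableSet_Icc]
      have h : ∫⁻ t in Set.Icc (0:ℝ) 1,
          (Set.Icc (0:ℝ) 1).indicator (fun _ => (1:ℝ≥0∞)) (ggs8 z t) ∂(F B₁ B₂)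
          = ∫⁻ _t in Set.Icc (0:ℝ) 1, (1:ℝ≥0∞) ∂(F B₁ B₂) := by
        apply setLIntegral_congr_fun measurableSet_Icc
        intro t ht; beta_reduce
        simp [Set.indicator, ggs8_mem hz ht]
      rw [h, setLIntegral_one, hFsupp B₁ B₂]
    · -- Chapman–Kolmogorov
      intro B₁ B₂ B₃ h₁ h₂ h₃ h₁₂ h₂₃ z₁ hz₁ Γ hΓ
      have := hFprob B₁ B₂; have := hFprob B₂ B₃; have := hFprob B₁ B₃
      have hpre : MeasurableSet (ggs8 z₁ ⁻¹' Γ) := (ggs8_meas z₁) hΓ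
      -- LHS
      have hL : Q B₁ B₃ z₁ Γ
          = ∫⁻ y in Set.Icc (0:ℝ) 1, ∫⁻ z in Set.Icc (0:ℝ) 1,
              (ggs8 z₁ ⁻¹' Γ).indicator (fun _ => (1:ℝ≥0∞)) (y + z - y * z)
                ∂(F B₂ B₃) ∂(F B₁ B₂) := by
        rw [Qeq_s8 (hFsupp B₁ B₃) (hQ B₁ B₃ h₁ h₃ (h₁₂.trans h₂₃)).1
          (hQ B₁ B₃ h₁ h₃ (h₁₂.trans h₂₃)).2 hz₁ hΓ]
        simp only [ind_comp_s8 Γ (ggs8 z₁)]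
        rw [setLint_ind_s8 (F B₁ B₃) hpre, F_inter_s8 (hFsupp B₁ B₃),
          hN B₁ B₂ B₃ h₁ h₂ h₃ h₁₂ h₂₃ _ hpre]
      rw [hL, lint_change_s8 (hFsupp B₁ B₂) (hQ B₁ B₂ h₁ h₂ h₁₂).1
        (hQ B₁ B₂ h₁ h₂ h₁₂).2 hz₁ (Kernel.measurable_coe _ hΓ)]
      apply setLIntegral_congr_fun measurableSet_Icc
      intro y hy; beta_reduce
      rw [Qeq_s8 (hFsupp B₂ B₃) (hQ B₂ B₃ h₂ h₃ h₂₃).1 (hQ B₂ B₃ h₂ h₃ h₂₃).2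
        (ggs8_mem hz₁ hy) hΓ]
      apply setLIntegral_congr_fun measurableSet_Icc
      intro z hz; beta_reduce
      rw [← ind_comp_s8 Γ (ggs8 z₁) (y + z - y * z)]
      congr 1
      unfold ggs8; ring
  · -- transition system → NTR system
    intro hT
    intro B₁ B₂ B₃ h₁ h₂ h₃ h₁₂ h₂₃ Γ hΓ
    have := hFprob B₁ B₂; have := hFprob B₂ B₃; have := hFprob B₁ B₃
    have h0 : (0:ℝ) ∈ Set.Icc (0:ℝ) 1 := by constructor <;> norm_num
    have hgg0 : ∀ t : ℝ, ggs8 0 t = t := fun t => by unfold ggs8; ring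
    have hFQ : F B₁ B₃ Γ = Q B₁ B₃ 0 Γ := by
      rw [Qeq_s8 (hFsupp B₁ B₃) (hQ B₁ B₃ h₁ h₃ (h₁₂.trans h₂₃)).1
        (hQ B₁ B₃ h₁ h₃ (h₁₂.trans h₂₃)).2 h0 hΓ]
      simp only [hgg0]
      rw [setLint_ind_s8 (F B₁ B₃) hΓ, F_inter_s8 (hFsupp B₁ B₃)]
    rw [hFQ, hT.2 B₁ B₂ B₃ h₁ h₂ h₃ h₁₂ h₂₃ 0 h0 Γ hΓ,
      lint_change_s8 (hFsupp B₁ B₂) (hQ B₁ B₂ h₁ h₂ h₁₂).1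
        (hQ B₁ B₂ h₁ h₂ h₁₂).2 h0 (Kernel.measurable_coe _ hΓ)]
    apply setLIntegral_congr_fun measurableSet_Icc
    intro y hy; beta_reduce
    rw [hgg0 y, Qeq_s8 (hFsupp B₂ B₃) (hQ B₂ B₃ h₂ h₃ h₂₃).1 (hQ B₂ B₃ h₂ h₃ h₂₃).2 hy hΓ]
    apply setLIntegral_congr_fun measurableSet_Icc
    intro z hz; beta_reduce
    congr 1
    show ggs8 y z = y + z - y * z
    unfold ggs8; ring
end

section
/- Let (Y₁,…,Y_k) have a completely neutral distribution on the simplex, set Y_{k+1}:=1−∑_{j=1}^k Y_j, and let X be a random variable with values in {1,…,k+1} such that 𝒫[X=j | Y₁,…,Y_{k+1}] = Y_j a.s. for every j=1,…,k+1. Then for every j with 𝒫(X=j)>0, the conditional distribution of (Y₁,…,Y_k) given X=j is completely neutral. -/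
open MeasureTheory ProbabilityTheory
open scoped ENNReal BigOperators

/-- A random vector `(Y₁,…,Y_k)` with values in the simplex has a completely neutral
distribution if there exist independent `[0,1]`-valued random variables `V₁,…,V_k` such that
`(Y₁,…,Y_k)` has the same distribution as `(V₁, V₂(1-V₁), …, V_k ∏_{j<k}(1-V_j))`; equivalently
there exist laws `ν₁,…,ν_k` on `[0,1]` such that the law of `(Y₁,…,Y_k)` is the image of
`ν₁ ⊗ … ⊗ ν_k` under `v ↦ (v_j ∏_{i<j}(1-v_i))_j`. -/
def IsCompletelyNeutral {Ω : Type*} [MeasurableSpace Ω] (Pr : Measure Ω)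
    {k : ℕ} (Y : Fin k → Ω → ℝ) : Prop :=
  ∃ ν : Fin k → Measure ℝ, (∀ j, IsProbabilityMeasure (ν j)) ∧
    (∀ j, ν j (Set.Icc (0:ℝ) 1) = 1) ∧
    Measure.map (fun ω (j : Fin k) => Y j ω) Pr
      = Measure.map (fun (v : Fin k → ℝ) (j : Fin k) => v j * ∏ i ∈ Finset.Iio j, (1 - v i))
          (Measure.pi ν)

lemma lintegral_pi_prod : ∀ {n : ℕ} (ν : Fin n → Measure ℝ),
    (∀ i, SigmaFinite (ν i)) → ∀ (f : Fin n → ℝ → ℝ≥0∞), (∀ i, Measurable (f i)) →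
    ∫⁻ x, ∏ i, f i (x i) ∂Measure.pi ν = ∏ i, ∫⁻ x, f i x ∂ν i := by
  intro n
  induction n with
  | zero =>
      intro ν _ f _
      simp [lintegral_const]
  | succ n ih =>
      intro ν hσ f hf
      haveI := hσ
      have hmeas : Measurable fun y : Fin n → ℝ => ∏ j, f j.succ (y j) :=
        Finset.measurable_prod _ fun j _ => (hf j.succ).comp (measurable_pi_apply j)
      have hpres := measurePreserving_piFinSuccAbove (fun i => ν i) 0
      set e := MeasurableEquiv.piFinSuccAbove (fun _ : Fin (n+1) => ℝ) 0 with he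
      have hFmeas : Measurable fun p : ℝ × (Fin n → ℝ) =>
          f 0 p.1 * ∏ j, f j.succ (p.2 j) :=
        ((hf 0).comp measurable_fst).mul (hmeas.comp measurable_snd)
      have key : ∫⁻ x, ∏ i, f i (x i) ∂Measure.pi ν
          = ∫⁻ x, (fun p : ℝ × (Fin n → ℝ) => f 0 p.1 * ∏ j, f j.succ (p.2 j)) (e x)
              ∂Measure.pi ν := by
        refine lintegral_congr fun x => ?_
        simp [he, MeasurableEquiv.piFinSuccAbove_apply, Fin.prod_univ_succ,
          Fin.zero_succAbove, Fin.tail]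
      rw [key, hpres.lintegral_comp hFmeas]
      have hm : (Measure.pi fun j : Fin n => ν ((0 : Fin (n+1)).succAbove j))
          = Measure.pi fun j : Fin n => ν j.succ := by
        congr 1
      rw [lintegral_prod_mul (hf 0).aemeasurable hmeas.aemeasurable, hm,
        ih (fun j => ν j.succ) (fun j => hσ j.succ) (fun j => f j.succ) (fun j => hf j.succ),
        Fin.prod_univ_succ]

lemma stick_measurable {k : ℕ} :
    Measurable (fun (v : Fin k → ℝ) (j : Fin k) => v j * ∏ i ∈ Finset.Iio j, (1 - v i)) := by
  refine measurable_pi_lambda _ fun j => ?_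
  exact (measurable_pi_apply j).mul
    (Finset.measurable_prod _ fun i _ => measurable_const.sub (measurable_pi_apply i))

lemma key_lemma {k : ℕ} (ν : Fin k → Measure ℝ)
    (hprob : ∀ i, IsProbabilityMeasure (ν i)) (hIcc : ∀ i, ν i (Set.Icc 0 1) = 1)
    (g : Fin k → ℝ → ℝ≥0∞) (hg : ∀ i, Measurable (g i))
    (hg1 : ∀ i, ∀ v ∈ Set.Icc (0:ℝ) 1, g i v ≤ 1)
    (μ : Measure (Fin k → ℝ)) (c : ℝ≥0∞) (hc0 : c ≠ 0) (hcT : c ≠ ∞)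
    (hctot : ∫⁻ v, ∏ i, g i (v i) ∂(Measure.pi ν) = c)
    (hμ : ∀ B : Set (Fin k → ℝ), MeasurableSet B → c * μ B
      = ∫⁻ v in (fun (v : Fin k → ℝ) (j : Fin k) =>
          v j * ∏ i ∈ Finset.Iio j, (1 - v i)) ⁻¹' B, ∏ i, g i (v i) ∂(Measure.pi ν)) :
    ∃ ν' : Fin k → Measure ℝ, (∀ i, IsProbabilityMeasure (ν' i)) ∧
      (∀ i, ν' i (Set.Icc (0:ℝ) 1) = 1) ∧
      μ = Measure.map (fun (v : Fin k → ℝ) (j : Fin k) =>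
            v j * ∏ i ∈ Finset.Iio j, (1 - v i)) (Measure.pi ν') := by
  haveI := hprob
  set T := fun (v : Fin k → ℝ) (j : Fin k) => v j * ∏ i ∈ Finset.Iio j, (1 - v i) with hT
  have hTm : Measurable T := stick_measurable
  set cc : Fin k → ℝ≥0∞ := fun i => ∫⁻ x, g i x ∂ν i with hcc
  have hcprod : ∏ i, cc i = c := by
    rw [← hctot, lintegral_pi_prod ν (fun i => inferInstance) g hg]
  have hnull : ∀ i, ν i (Set.Icc (0:ℝ) 1)ᶜ = 0 := by
    intro i
    rw [measure_compl measurableSet_Icc (measure_ne_top _ _), hIcc i, measure_univ, tsub_self]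
  have hgae : ∀ i, ∀ᵐ v ∂ν i, g i v ≤ 1 := by
    intro i
    have h1 : ∀ᵐ v ∂ν i, v ∈ Set.Icc (0:ℝ) 1 :=
      MeasureTheory.mem_ae_iff.mpr (hnull i)
    filter_upwards [h1] with v hv using hg1 i v hv
  have hcle : ∀ i, cc i ≤ 1 := by
    intro i
    calc cc i ≤ ∫⁻ _, 1 ∂ν i := lintegral_mono_ae (hgae i)
    _ = 1 := by simp
  have hcne0 : ∀ i, cc i ≠ 0 := by
    intro i h
    exact hc0 (by rw [← hcprod]; exact Finset.prod_eq_zero (Finset.mem_univ i) h)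
  have hcneT : ∀ i, cc i ≠ ∞ := fun i => ((hcle i).trans_lt ENNReal.one_lt_top).ne
  set ν' : Fin k → Measure ℝ := fun i => (ν i).withDensity fun v => (cc i)⁻¹ * g i v with hν'
  have hν'apply : ∀ i (s : Set ℝ), MeasurableSet s →
      ν' i s = ∫⁻ v in s, (cc i)⁻¹ * g i v ∂ν i := fun i s hs => withDensity_apply _ hs
  have hν'univ : ∀ i, ν' i Set.univ = 1 := by
    intro i
    rw [hν'apply i _ MeasurableSet.univ, Measure.restrict_univ,
      lintegral_const_mul _ (hg i), ENNReal.inv_mul_cancel (hcne0 i) (hcneT i)]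
  have hν'prob : ∀ i, IsProbabilityMeasure (ν' i) := fun i => ⟨hν'univ i⟩
  haveI := hν'prob
  have hν'Icc : ∀ i, ν' i (Set.Icc (0:ℝ) 1) = 1 := by
    intro i
    have hcpl : ν' i (Set.Icc (0:ℝ) 1)ᶜ = 0 := by
      rw [hν'apply i _ measurableSet_Icc.compl]
      exact setLIntegral_measure_zero _ _ (hnull i)
    have := measure_add_measure_compl (μ := ν' i) (s := Set.Icc (0:ℝ) 1) measurableSet_Icc
    rw [hcpl, add_zero, hν'univ i] at this
    exact this
  have hpieq : Measure.pi ν'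
      = (Measure.pi ν).withDensity fun v => ∏ i, (cc i)⁻¹ * g i (v i) := by
    refine Measure.pi_eq fun s hs => ?_
    rw [withDensity_apply _ (MeasurableSet.univ_pi hs), ← lintegral_indicator
      (MeasurableSet.univ_pi hs)]
    have hpt : ∀ v : Fin k → ℝ,
        (Set.pi Set.univ s).indicator (fun v => ∏ i, (cc i)⁻¹ * g i (v i)) v
          = ∏ i, (s i).indicator (fun x => (cc i)⁻¹ * g i x) (v i) := by
      intro v
      by_cases hv : v ∈ Set.pi Set.univ s
      · rw [Set.indicator_of_mem hv]
        exact Finset.prod_congr rfl fun i _ =>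
          (Set.indicator_of_mem (hv i (Set.mem_univ i)) fun x => (cc i)⁻¹ * g i x).symm
      · rw [Set.indicator_of_notMem hv]
        have hex : ∃ i, v i ∉ s i := by
          by_contra h
          push_neg at h
          exact hv fun i _ => h i
        obtain ⟨i, hi⟩ := hex
        exact (Finset.prod_eq_zero (Finset.mem_univ i)
          (by rw [Set.indicator_of_notMem hi])).symm
    rw [lintegral_congr hpt, lintegral_pi_prod ν (fun i => inferInstance) _
      (fun i => ((hg i).const_mul _).indicator (hs i))]
    exact Finset.prod_congr rfl fun i _ => by
      rw [lintegral_indicator (hs i), ← hν'apply i _ (hs i)]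
  refine ⟨ν', hν'prob, hν'Icc, ?_⟩
  refine Measure.ext fun B hB => ?_
  rw [Measure.map_apply hTm hB, hpieq, withDensity_apply _ (hTm hB)]
  refine (ENNReal.mul_right_inj hc0 hcT).mp ?_
  have hGmeas : Measurable fun v : Fin k → ℝ => ∏ i, g i (v i) :=
    Finset.measurable_prod _ fun i _ => (hg i).comp (measurable_pi_apply i)
  have hI : ∫⁻ v in T ⁻¹' B, ∏ i, (cc i)⁻¹ * g i (v i) ∂Measure.pi ν
      = (∏ i, (cc i)⁻¹) * ∫⁻ v in T ⁻¹' B, ∏ i, g i (v i) ∂Measure.pi ν := by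
    rw [← lintegral_const_mul _ hGmeas]
    exact lintegral_congr fun v => Finset.prod_mul_distrib
  have hone : c * ∏ i, (cc i)⁻¹ = 1 := by
    rw [← hcprod, ← Finset.prod_mul_distrib]
    exact Finset.prod_eq_one fun i _ => ENNReal.mul_inv_cancel (hcne0 i) (hcneT i)
  rw [hμ B hB, hI, ← mul_assoc, hone, one_mul]

lemma cond_map_eq {Ω : Type*} [MeasurableSpace Ω] (Pr : Measure Ω) [IsProbabilityMeasure Pr]
    {k : ℕ} (Y : Fin k → Ω → ℝ) (hYmeas : ∀ j, Measurable (Y j))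
    (A : Set Ω) (hA : MeasurableSet A)
    (f : (Fin k → ℝ) → ℝ) (hf : Measurable f)
    (hcond : Pr[A.indicator (fun _ => (1:ℝ)) |
        MeasurableSpace.comap (fun ω (j : Fin k) => Y j ω) inferInstance]
      =ᵐ[Pr] fun ω => f (fun j => Y j ω))
    (hW0 : ∀ᵐ ω ∂Pr, 0 ≤ f (fun j => Y j ω)) (hW1 : ∀ᵐ ω ∂Pr, f (fun j => Y j ω) ≤ 1)
    (B : Set (Fin k → ℝ)) (hB : MeasurableSet B) :
    Pr (A ∩ (fun ω (j : Fin k) => Y j ω) ⁻¹' B)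
      = ∫⁻ y in B, ENNReal.ofReal (f y) ∂(Measure.map (fun ω (j : Fin k) => Y j ω) Pr) := by
  set Yv : Ω → Fin k → ℝ := fun ω (j : Fin k) => Y j ω with hYv_def
  have hYv : Measurable Yv := measurable_pi_lambda _ hYmeas
  have hm : MeasurableSpace.comap Yv inferInstance ≤ _ := hYv.comap_le
  haveI : IsFiniteMeasure (Pr.trim hm) := isFiniteMeasure_trim hm
  have hs : MeasurableSet[MeasurableSpace.comap Yv inferInstance] (Yv ⁻¹' B) := ⟨B, hB, rfl⟩
  have hsΩ : MeasurableSet (Yv ⁻¹' B) := hYv hB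
  have hint_ind : Integrable (A.indicator fun _ => (1:ℝ)) Pr := (integrable_const 1).indicator hA
  have hreal : ∫ ω in Yv ⁻¹' B, f (Yv ω) ∂Pr
      = ∫ ω in Yv ⁻¹' B, A.indicator (fun _ => (1:ℝ)) ω ∂Pr := by
    rw [← setIntegral_condExp hm hint_ind hs]
    refine setIntegral_congr_ae hsΩ ?_
    filter_upwards [hcond] with ω h _ using h.symm
  have hLHS : ∫ ω in Yv ⁻¹' B, A.indicator (fun _ => (1:ℝ)) ω ∂Pr
      = (Pr (A ∩ Yv ⁻¹' B)).toReal := by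
    rw [integral_indicator hA, setIntegral_const, measureReal_def, Measure.restrict_apply hA, smul_eq_mul, mul_one]
  have hInt_f : Integrable (fun ω => f (Yv ω)) Pr := by
    refine ⟨(hf.comp hYv).aestronglyMeasurable, HasFiniteIntegral.of_bounded (C := 1) ?_⟩
    filter_upwards [hW0, hW1] with ω h0 h1
    rw [Real.norm_eq_abs, abs_le]
    exact ⟨by linarith, h1⟩
  have step : Pr (A ∩ Yv ⁻¹' B) = ∫⁻ ω in Yv ⁻¹' B, ENNReal.ofReal (f (Yv ω)) ∂Pr := by
    rw [← ofReal_integral_eq_lintegral_ofReal hInt_f.restrict (ae_restrict_of_ae hW0),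
      hreal, hLHS, ENNReal.ofReal_toReal (measure_ne_top _ _)]
  rw [step, setLIntegral_map hB (f := fun y => ENNReal.ofReal (f y))
    (ENNReal.measurable_ofReal.comp hf) hYv]

lemma main_aux {Ω : Type*} [MeasurableSpace Ω] (Pr : Measure Ω) [IsProbabilityMeasure Pr]
    {k : ℕ} (Y : Fin k → Ω → ℝ) (hYmeas : ∀ j, Measurable (Y j))
    (ν : Fin k → Measure ℝ) (hν1 : ∀ i, IsProbabilityMeasure (ν i))
    (hν2 : ∀ i, ν i (Set.Icc (0:ℝ) 1) = 1)
    (hmap : Measure.map (fun ω (j : Fin k) => Y j ω) Pr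
      = Measure.map (fun (v : Fin k → ℝ) (j : Fin k) => v j * ∏ i ∈ Finset.Iio j, (1 - v i))
          (Measure.pi ν))
    (A : Set Ω) (hA : MeasurableSet A) (hApos : 0 < Pr A)
    (f : (Fin k → ℝ) → ℝ) (hf : Measurable f)
    (hcond : Pr[A.indicator (fun _ => (1:ℝ)) |
        MeasurableSpace.comap (fun ω (j : Fin k) => Y j ω) inferInstance]
      =ᵐ[Pr] fun ω => f (fun j => Y j ω))
    (hW0 : ∀ᵐ ω ∂Pr, 0 ≤ f (fun j => Y j ω)) (hW1 : ∀ᵐ ω ∂Pr, f (fun j => Y j ω) ≤ 1)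
    (g : Fin k → ℝ → ℝ≥0∞) (hg : ∀ i, Measurable (g i))
    (hg1 : ∀ i, ∀ v ∈ Set.Icc (0:ℝ) 1, g i v ≤ 1)
    (hGf : ∀ v : Fin k → ℝ, (∀ i, v i ∈ Set.Icc (0:ℝ) 1) →
      ∏ i, g i (v i)
        = ENNReal.ofReal (f (fun j => v j * ∏ i ∈ Finset.Iio j, (1 - v i)))) :
    IsCompletelyNeutral (Pr[|A]) Y := by
  haveI := hν1
  have hYv : Measurable (fun ω (j : Fin k) => Y j ω) := measurable_pi_lambda _ hYmeas
  have hTm : Measurable (fun (v : Fin k → ℝ) (j : Fin k) =>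
      v j * ∏ i ∈ Finset.Iio j, (1 - v i)) := stick_measurable
  have hbox : Measure.pi ν (Set.pi Set.univ fun _ : Fin k => Set.Icc (0:ℝ) 1) = 1 := by
    rw [Measure.pi_pi]
    simp [hν2]
  have hnull : Measure.pi ν (Set.pi Set.univ fun _ : Fin k => Set.Icc (0:ℝ) 1)ᶜ = 0 := by
    rw [measure_compl (MeasurableSet.univ_pi fun _ => measurableSet_Icc) (measure_ne_top _ _),
      hbox, measure_univ, tsub_self]
  have hπIcc : ∀ᵐ v ∂Measure.pi ν, ∀ i, v i ∈ Set.Icc (0:ℝ) 1 := by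
    filter_upwards [MeasureTheory.mem_ae_iff.mpr hnull] with v hv i using hv i (Set.mem_univ i)
  have hchain : ∀ B : Set (Fin k → ℝ), MeasurableSet B →
      Pr (A ∩ (fun ω (j : Fin k) => Y j ω) ⁻¹' B)
        = ∫⁻ v in (fun (v : Fin k → ℝ) (j : Fin k) =>
            v j * ∏ i ∈ Finset.Iio j, (1 - v i)) ⁻¹' B, ∏ i, g i (v i) ∂Measure.pi ν := by
    intro B hB
    rw [cond_map_eq Pr Y hYmeas A hA f hf hcond hW0 hW1 B hB, hmap,
      setLIntegral_map hB (f := fun y => ENNReal.ofReal (f y))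
        (ENNReal.measurable_ofReal.comp hf) hTm]
    refine (lintegral_congr_ae (ae_restrict_of_ae ?_)).symm
    filter_upwards [hπIcc] with v hv using hGf v hv
  have hctot : ∫⁻ v, ∏ i, g i (v i) ∂Measure.pi ν = Pr A := by
    have h := hchain Set.univ MeasurableSet.univ
    simp only [Set.preimage_univ, Set.inter_univ, Measure.restrict_univ] at h
    exact h.symm
  have hc0 : Pr A ≠ 0 := hApos.ne'
  have hcT : Pr A ≠ ∞ := measure_ne_top _ _
  have hμ : ∀ B : Set (Fin k → ℝ), MeasurableSet B →
      Pr A * (Measure.map (fun ω (j : Fin k) => Y j ω) (Pr[|A])) B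
        = ∫⁻ v in (fun (v : Fin k → ℝ) (j : Fin k) =>
            v j * ∏ i ∈ Finset.Iio j, (1 - v i)) ⁻¹' B, ∏ i, g i (v i) ∂Measure.pi ν := by
    intro B hB
    rw [Measure.map_apply hYv hB, cond_apply hA, ← mul_assoc,
      ENNReal.mul_inv_cancel hc0 hcT, one_mul, hchain B hB]
  obtain ⟨ν', h1, h2, h3⟩ := key_lemma ν hν1 hν2 g hg hg1
    (Measure.map (fun ω (j : Fin k) => Y j ω) (Pr[|A])) (Pr A) hc0 hcT hctot hμ
  exact ⟨ν', h1, h2, h3⟩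

lemma fin_prod_Iio {k : ℕ} (i : Fin k) (f : Fin k → ℝ) (u : ℕ → ℝ)
    (hu : ∀ l : Fin k, u l.val = f l) :
    ∏ l ∈ Finset.Iio i, f l = ∏ n ∈ Finset.range i.val, u n := by
  refine Finset.prod_nbij' (fun l => (l : ℕ)) (fun n => if h : n < k then ⟨n, h⟩ else i)
    ?_ ?_ ?_ ?_ ?_
  · intro l hl
    have := Finset.mem_Iio.mp hl
    simp only [Finset.mem_range]
    exact this
  · intro n hn
    have hnk : n < k := lt_trans (Finset.mem_range.mp hn) i.isLt
    have := Finset.mem_range.mp hn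
    simp only [dif_pos hnk, Finset.mem_Iio]
    exact this
  · intro l hl
    simp [l.isLt]
  · intro n hn
    have hnk : n < k := lt_trans (Finset.mem_range.mp hn) i.isLt
    simp [hnk]
  · intro l hl
    exact (hu l).symm

lemma stick_sum {k : ℕ} (v : Fin k → ℝ) :
    ∑ i, v i * ∏ l ∈ Finset.Iio i, (1 - v l) = 1 - ∏ i, (1 - v i) := by
  set u : ℕ → ℝ := fun n => if h : n < k then v ⟨n, h⟩ else 0 with hu_def
  have hu : ∀ l : Fin k, u l.val = v l := fun l => by simp [hu_def, l.isLt]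
  have h1 : ∀ i : Fin k, v i * ∏ l ∈ Finset.Iio i, (1 - v l)
      = (fun n : ℕ => u n * ∏ m ∈ Finset.range n, (1 - u m)) i.val := by
    intro i
    simp only []
    rw [hu i, fin_prod_Iio i (fun l => 1 - v l) (fun n => 1 - u n)
      (fun l => by rw [hu l])]
  calc ∑ i : Fin k, v i * ∏ l ∈ Finset.Iio i, (1 - v l)
      = ∑ i : Fin k, (fun n : ℕ => u n * ∏ m ∈ Finset.range n, (1 - u m)) i.val :=
        Finset.sum_congr rfl fun i _ => h1 i
    _ = ∑ n ∈ Finset.range k, u n * ∏ m ∈ Finset.range n, (1 - u m) :=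
        Fin.sum_univ_eq_sum_range (fun n : ℕ => u n * ∏ m ∈ Finset.range n, (1 - u m)) k
    _ = ∑ n ∈ Finset.range k, ((∏ m ∈ Finset.range n, (1 - u m))
          - ∏ m ∈ Finset.range (n+1), (1 - u m)) := by
        refine Finset.sum_congr rfl fun n _ => ?_
        rw [Finset.prod_range_succ]
        ring
    _ = ∏ m ∈ Finset.range 0, (1 - u m) - ∏ m ∈ Finset.range k, (1 - u m) :=
        Finset.sum_range_sub' _ k
    _ = 1 - ∏ i : Fin k, (1 - v i) := by
        rw [Finset.prod_range_zero]
        congr 1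
        rw [← Fin.prod_univ_eq_prod_range (fun n => 1 - u n) k]
        exact Finset.prod_congr rfl fun i _ => by rw [hu i]

/-- Corollary B.2. If `(Y₁,…,Y_k)` is completely neutral,
`Y_{k+1} := 1 - ∑_j Y_j`, and `X` satisfies `𝒫[X = j | Y₁,…,Y_{k+1}] = Y_j` for
`j = 1,…,k+1`, then the conditional distribution of `(Y₁,…,Y_k)` given `X = j` is
completely neutral. -/
theorem stmt19 {Ω : Type*} [MeasurableSpace Ω] (Pr : Measure Ω) [IsProbabilityMeasure Pr]
    (k : ℕ) (Y : Fin k → Ω → ℝ) (hYmeas : ∀ j, Measurable (Y j))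
    (hsimplex : ∀ᵐ ω ∂Pr, (∀ j, Y j ω ∈ Set.Icc (0:ℝ) 1) ∧ ∑ j, Y j ω ≤ 1)
    (hCN : IsCompletelyNeutral Pr Y)
    (X : Ω → ℕ) (hX : Measurable X) (hXrange : ∀ ω, 1 ≤ X ω ∧ X ω ≤ k+1)
    (hXcond : ∀ j : Fin k,
      Pr[Set.indicator {ω | X ω = j.val + 1} (fun _ => (1:ℝ)) |
          MeasurableSpace.comap (fun ω (j : Fin k) => Y j ω) inferInstance]
        =ᵐ[Pr] Y j)
    (hXcondLast :
      Pr[Set.indicator {ω | X ω = k + 1} (fun _ => (1:ℝ)) |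
          MeasurableSpace.comap (fun ω (j : Fin k) => Y j ω) inferInstance]
        =ᵐ[Pr] fun ω => 1 - ∑ j, Y j ω) :
    ∀ j, 1 ≤ j → j ≤ k + 1 → 0 < Pr {ω | X ω = j} →
      IsCompletelyNeutral (Pr[|{ω | X ω = j}]) Y := by
  intro j hj1 hj2 hjpos
  obtain ⟨ν, hν1, hν2, hmap⟩ := hCN
  have hA : MeasurableSet {ω | X ω = j} := hX (measurableSet_singleton j)
  by_cases hjk : j ≤ k
  · have hjlt : j - 1 < k := by omega
    set jj : Fin k := ⟨j - 1, hjlt⟩ with hjj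
    have hjjval : jj.val + 1 = j := by
      simp only [hjj]
      omega
    have hAeq : {ω | X ω = jj.val + 1} = {ω | X ω = j} := by
      ext ω
      simp [hjjval]
    refine main_aux Pr Y hYmeas ν hν1 hν2 hmap _ hA hjpos (fun y => y jj)
      (measurable_pi_apply jj) ?_ ?_ ?_
      (fun i v => if i < jj then ENNReal.ofReal (1 - v)
        else if i = jj then ENNReal.ofReal v else 1) ?_ ?_ ?_
    · have h := hXcond jj
      rw [hAeq] at h
      exact h
    · filter_upwards [hsimplex] with ω h using (h.1 jj).1
    · filter_upwards [hsimplex] with ω h using (h.1 jj).2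
    · intro i
      by_cases h1 : i < jj
      · simp only [if_pos h1]
        exact (measurable_const.sub measurable_id).ennreal_ofReal
      · by_cases h2 : i = jj
        · simp only [if_neg h1, if_pos h2]
          exact measurable_id.ennreal_ofReal
        · simp only [if_neg h1, if_neg h2]
          exact measurable_const
    · intro i v hv
      obtain ⟨hv0, hv1⟩ := hv
      by_cases h1 : i < jj
      · simp only [if_pos h1]
        exact ENNReal.ofReal_le_one.mpr (by linarith)
      · by_cases h2 : i = jj
        · simp only [if_neg h1, if_pos h2]
          exact ENNReal.ofReal_le_one.mpr hv1
        · simp only [if_neg h1, if_neg h2]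
          exact le_rfl
    · intro v hv
      have houter : ∀ i : Fin k, i ∉ Finset.Iic jj →
          (if i < jj then ENNReal.ofReal (1 - v i)
            else if i = jj then ENNReal.ofReal (v i) else 1) = 1 := by
        intro i hi
        rw [Finset.mem_Iic] at hi
        rw [if_neg (fun h => hi h.le), if_neg (fun h => hi h.le)]
      calc ∏ i, (if i < jj then ENNReal.ofReal (1 - v i)
            else if i = jj then ENNReal.ofReal (v i) else 1)
          = ∏ i ∈ Finset.Iic jj, (if i < jj then ENNReal.ofReal (1 - v i)
            else if i = jj then ENNReal.ofReal (v i) else 1) :=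
            (Finset.prod_subset (Finset.subset_univ _) (fun i _ hi => houter i hi)).symm
        _ = (if jj < jj then ENNReal.ofReal (1 - v jj)
            else if jj = jj then ENNReal.ofReal (v jj) else 1)
            * ∏ i ∈ Finset.Iio jj, (if i < jj then ENNReal.ofReal (1 - v i)
            else if i = jj then ENNReal.ofReal (v i) else 1) := by
            rw [← Finset.Iio_insert, Finset.prod_insert (by simp)]
        _ = ENNReal.ofReal (v jj) * ∏ i ∈ Finset.Iio jj, ENNReal.ofReal (1 - v i) := by
            rw [if_neg (lt_irrefl jj), if_pos rfl]
            congr 1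
            exact Finset.prod_congr rfl fun i hi => by rw [if_pos (Finset.mem_Iio.mp hi)]
        _ = ENNReal.ofReal (v jj * ∏ i ∈ Finset.Iio jj, (1 - v i)) := by
            rw [← ENNReal.ofReal_prod_of_nonneg (fun i _ => by linarith [(hv i).2]),
              ← ENNReal.ofReal_mul (hv jj).1]
  · have hjeq : j = k + 1 := by omega
    subst hjeq
    refine main_aux Pr Y hYmeas ν hν1 hν2 hmap _ hA hjpos (fun y => 1 - ∑ i, y i)
      (measurable_const.sub (Finset.measurable_sum _ fun i _ => measurable_pi_apply i))
      ?_ ?_ ?_ (fun _ v => ENNReal.ofReal (1 - v))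
      (fun i => (measurable_const.sub measurable_id).ennreal_ofReal)
      (fun i v hv => ENNReal.ofReal_le_one.mpr (by linarith [hv.1])) ?_
    · exact hXcondLast
    · filter_upwards [hsimplex] with ω h
      have h2 := h.2
      show (0:ℝ) ≤ 1 - ∑ i, Y i ω
      linarith
    · filter_upwards [hsimplex] with ω h
      have hsum : 0 ≤ ∑ i, Y i ω := Finset.sum_nonneg fun i _ => (h.1 i).1
      show (1:ℝ) - ∑ i, Y i ω ≤ 1
      linarith
    · intro v hv
      rw [← ENNReal.ofReal_prod_of_nonneg (fun i _ => by linarith [(hv i).2])]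
      congr 1
      have hss := stick_sum v
      show ∏ i, (1 - v i) = 1 - ∑ i, v i * ∏ l ∈ Finset.Iio i, (1 - v l)
      linarith
end
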